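/- arXiv:1407.4913 — 4 statements merged into one kernel-verified Lean document; each statement's English description precedes it below -/
import Mathlib

section
/- Let ψ be a branching mechanism of Lévy–Khintchine form with δ > 1, let d be an integer with d > 2γ/(γ−1), and fix K ∈ (0,∞). Then there exist a sequence (ρ_n)_{n≥1} of reals in (0, (K/ψ′(1))^{1/2}) and a constant C ∈ (0,∞), depending only on d, ψ and K, such that for all n ≥ 1: ρ_{n+1} ≤ e^{−n}·ρ_n, sup_{n≥1} n^{−2}·log(1/ρ_n) < ∞, and J(ρ_n) ≤ C. -/
open MeasureTheory Filter Set

noncomputable section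

/-- The branching mechanism `ψ(λ) = αλ + βλ² + ∫_{(0,∞)} (e^{−λr} − 1 + λr) π(dr)`. -/
def psiFun (α β : ℝ) (π : Measure ℝ) : ℝ → ℝ := fun l =>
  α * l + β * l ^ 2 + ∫ r, (Real.exp (-(l * r)) - 1 + l * r) ∂π

/-- `ψ′(λ) = α + 2βλ + ∫_{(0,∞)} r(1 − e^{−λr}) π(dr)`. -/
def psiDeriv (α β : ℝ) (π : Measure ℝ) : ℝ → ℝ := fun l =>
  α + 2 * β * l + ∫ r, r * (1 - Real.exp (-(l * r))) ∂π

/-- `(α, β, π)` is the datum of a (sub)critical branching mechanism of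
Lévy–Khintchine form: `α, β ≥ 0`, `π` is a Borel measure carried by `(0,∞)`
with `∫ min(r, r²) π(dr) < ∞`. -/
structure IsBranchingMechanism (α β : ℝ) (π : Measure ℝ) : Prop where
  alpha_nonneg : 0 ≤ α
  beta_nonneg : 0 ≤ β
  carried_on_pos : π (Set.Iic 0) = 0
  integ_min : Integrable (fun r => min r (r ^ 2)) π

/-- The lower index `γ_f = sup {c ≥ 0 : f(λ)λ^{−c} → ∞}` (with `sup ∅ = 0`). -/
def lowerIndex (f : ℝ → ℝ) : ℝ :=
  sSup {c : ℝ | 0 ≤ c ∧ Tendsto (fun l : ℝ => f l * l ^ (-c)) atTop atTop}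

/-- The upper index `η_f = inf {c ≥ 0 : f(λ)λ^{−c} → 0}`. -/
def upperIndex (f : ℝ → ℝ) : ℝ :=
  sInf {c : ℝ | 0 ≤ c ∧ Tendsto (fun l : ℝ => f l * l ^ (-c)) atTop (nhds 0)}

/-- `δ_f = sup {c ≥ 0 : ∃ C > 0, ∀ 1 ≤ μ ≤ λ, C f(μ)μ^{−c} ≤ f(λ)λ^{−c}}`. -/
def deltaIndex (f : ℝ → ℝ) : ℝ :=
  sSup {c : ℝ | 0 ≤ c ∧ ∃ C : ℝ, 0 < C ∧
    ∀ μ l : ℝ, 1 ≤ μ → μ ≤ l → C * (f μ * μ ^ (-c)) ≤ f l * l ^ (-c)}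

/-- `J(r) = r² q_r^{2/(d−2)} ∫_1^{q_r} ψ′(v) v^{−d/(d−2)} dv`
where `q_r = ψ′^{−1}(K·r^{−2})`. -/
def Jfun (α β : ℝ) (π : Measure ℝ) (ψ'inv : ℝ → ℝ) (K : ℝ) (d : ℕ) (r : ℝ) : ℝ :=
  r ^ 2 * ψ'inv (K / r ^ 2) ^ ((2 : ℝ) / ((d : ℝ) - 2)) *
    ∫ v in (1 : ℝ)..ψ'inv (K / r ^ 2), psiDeriv α β π v * v ^ (-(d : ℝ) / ((d : ℝ) - 2))
namespace S13

lemma exp_term_nonneg (x : ℝ) : 0 ≤ Real.exp (-x) - 1 + x := by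
  have := Real.add_one_le_exp (-x); linarith

lemma one_sub_exp_nonneg {x : ℝ} (hx : 0 ≤ x) : 0 ≤ 1 - Real.exp (-x) := by
  have : Real.exp (-x) ≤ Real.exp 0 := Real.exp_le_exp.mpr (by linarith)
  simpa using this

lemma one_sub_exp_le (x : ℝ) : 1 - Real.exp (-x) ≤ x := by
  have := Real.add_one_le_exp (-x); linarith

lemma one_sub_exp_le_one {x : ℝ} : 1 - Real.exp (-x) ≤ 1 := by
  have := Real.exp_pos (-x); linarith

lemma exp_term_le (x : ℝ) : Real.exp (-x) - 1 + x ≤ x * (1 - Real.exp (-x)) := by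
  have h1 : (x + 1) * Real.exp (-x) ≤ Real.exp x * Real.exp (-x) :=
    mul_le_mul_of_nonneg_right (Real.add_one_le_exp x) (Real.exp_pos (-x)).le
  rw [← Real.exp_add] at h1
  simp only [add_neg_cancel, Real.exp_zero] at h1
  nlinarith [Real.exp_pos (-x)]

variable {α β : ℝ} {π : Measure ℝ} (h : IsBranchingMechanism α β π)

include h in
lemma ae_pos : ∀ᵐ r ∂π, 0 < r := by
  rw [ae_iff]
  have : {r : ℝ | ¬ 0 < r} = Set.Iic 0 := by ext r; simp
  rw [this]; exact h.carried_on_pos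

lemma min_nonneg_of_pos {r : ℝ} (hr : 0 < r) : 0 ≤ min r (r ^ 2) :=
  le_min hr.le (by positivity)

lemma deriv_bound {v r : ℝ} (hr : 0 < r) (hv : 0 ≤ v) :
    ‖r * (1 - Real.exp (-(v * r)))‖ ≤ (v + 1) * min r (r ^ 2) := by
  have hx : 0 ≤ v * r := by positivity
  have h0 : 0 ≤ 1 - Real.exp (-(v * r)) := one_sub_exp_nonneg hx
  rw [Real.norm_eq_abs, abs_of_nonneg (by nlinarith)]
  rcases le_total r 1 with hr1 | hr1
  · have hmin : min r (r ^ 2) = r ^ 2 := min_eq_right (by nlinarith)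
    rw [hmin]
    have := one_sub_exp_le (v * r)
    nlinarith
  · have hmin : min r (r ^ 2) = r := min_eq_left (by nlinarith)
    rw [hmin]
    have := @one_sub_exp_le_one (v * r)
    nlinarith

lemma fun_bound {v r : ℝ} (hr : 0 < r) (hv : 0 ≤ v) :
    ‖Real.exp (-(v * r)) - 1 + v * r‖ ≤ ((v + 1) * (v + 1)) * min r (r ^ 2) := by
  have hx : 0 ≤ v * r := by positivity
  rw [Real.norm_eq_abs, abs_of_nonneg (exp_term_nonneg _)]
  have h1 := exp_term_le (v * r)
  have h2 : v * r * (1 - Real.exp (-(v * r))) ≤ v * ((v + 1) * min r (r ^ 2)) := by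
    have hb := deriv_bound hr hv
    rw [Real.norm_eq_abs] at hb
    have : r * (1 - Real.exp (-(v * r))) ≤ (v + 1) * min r (r ^ 2) :=
      (le_abs_self _).trans hb
    calc v * r * (1 - Real.exp (-(v * r))) = v * (r * (1 - Real.exp (-(v * r)))) := by ring
    _ ≤ v * ((v + 1) * min r (r ^ 2)) := by
        apply mul_le_mul_of_nonneg_left this hv
  have hmin := min_nonneg_of_pos hr
  nlinarith

lemma meas_deriv (v : ℝ) :
    AEStronglyMeasurable (fun r : ℝ => r * (1 - Real.exp (-(v * r)))) π := by
  apply Continuous.aestronglyMeasurable; fun_prop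

lemma meas_fun (v : ℝ) :
    AEStronglyMeasurable (fun r : ℝ => Real.exp (-(v * r)) - 1 + v * r) π := by
  apply Continuous.aestronglyMeasurable; fun_prop

include h in
lemma integ_deriv {v : ℝ} (hv : 0 ≤ v) :
    Integrable (fun r : ℝ => r * (1 - Real.exp (-(v * r)))) π := by
  refine (h.integ_min.const_mul (v + 1)).mono' (meas_deriv v) ?_
  exact (ae_pos h).mono fun r hr => deriv_bound hr hv

include h in
lemma integ_fun {v : ℝ} (hv : 0 ≤ v) :
    Integrable (fun r : ℝ => Real.exp (-(v * r)) - 1 + v * r) π := by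
  refine (h.integ_min.const_mul ((v + 1) * (v + 1))).mono' (meas_fun v) ?_
  exact (ae_pos h).mono fun r hr => fun_bound hr hv

include h in
lemma psiDeriv_nonneg {v : ℝ} (hv : 0 ≤ v) : 0 ≤ psiDeriv α β π v := by
  unfold psiDeriv
  have h1 : 0 ≤ ∫ r, r * (1 - Real.exp (-(v * r))) ∂π := by
    apply integral_nonneg_of_ae
    exact (ae_pos h).mono fun r hr => by
      have := one_sub_exp_nonneg (x := v * r) (by positivity)
      positivity
  have := h.alpha_nonneg; have := h.beta_nonneg
  positivity

include h in
lemma psiDeriv_mono {u v : ℝ} (hu : 0 ≤ u) (huv : u ≤ v) :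
    psiDeriv α β π u ≤ psiDeriv α β π v := by
  unfold psiDeriv
  have hv : (0:ℝ) ≤ v := hu.trans huv
  have h1 : ∫ r, r * (1 - Real.exp (-(u * r))) ∂π ≤ ∫ r, r * (1 - Real.exp (-(v * r))) ∂π := by
    refine integral_mono_ae (integ_deriv h hu) (integ_deriv h hv) ?_
    refine (ae_pos h).mono fun r hr => ?_
    show r * (1 - Real.exp (-(u * r))) ≤ r * (1 - Real.exp (-(v * r)))
    have : Real.exp (-(v * r)) ≤ Real.exp (-(u * r)) := by
      apply Real.exp_le_exp.mpr; nlinarith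
    nlinarith
  have := h.beta_nonneg
  nlinarith

include h in
lemma psi_nonneg {v : ℝ} (hv : 0 ≤ v) : 0 ≤ psiFun α β π v := by
  unfold psiFun
  have h1 : 0 ≤ ∫ r, (Real.exp (-(v * r)) - 1 + v * r) ∂π :=
    integral_nonneg fun r => exp_term_nonneg _
  have := h.alpha_nonneg; have := h.beta_nonneg
  positivity

include h in
lemma psi_le {v : ℝ} (hv : 0 ≤ v) : psiFun α β π v ≤ v * psiDeriv α β π v := by
  unfold psiFun psiDeriv
  have h1 : ∫ r, (Real.exp (-(v * r)) - 1 + v * r) ∂π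
      ≤ ∫ r, v * (r * (1 - Real.exp (-(v * r)))) ∂π := by
    refine integral_mono_ae (integ_fun h hv) ((integ_deriv h hv).const_mul v) ?_
    refine (ae_pos h).mono fun r hr => ?_
    show Real.exp (-(v * r)) - 1 + v * r ≤ v * (r * (1 - Real.exp (-(v * r))))
    have := exp_term_le (v * r)
    nlinarith
  rw [integral_const_mul] at h1
  have := h.beta_nonneg
  nlinarith

include h in
lemma intmin_nonneg : 0 ≤ ∫ r, min r (r ^ 2) ∂π := by
  apply integral_nonneg_of_ae
  exact (ae_pos h).mono fun r hr => min_nonneg_of_pos hr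

include h in
lemma psi_quad {v : ℝ} (hv : 1 ≤ v) :
    psiFun α β π v ≤ (α + β + ∫ r, min r (r ^ 2) ∂π) * v ^ 2 := by
  have hv0 : (0:ℝ) ≤ v := by linarith
  unfold psiFun
  have h1 : ∫ r, (Real.exp (-(v * r)) - 1 + v * r) ∂π
      ≤ ∫ r, v ^ 2 * min r (r ^ 2) ∂π := by
    refine integral_mono_ae (integ_fun h hv0) (h.integ_min.const_mul (v ^ 2)) ?_
    refine (ae_pos h).mono fun r hr => ?_
    show Real.exp (-(v * r)) - 1 + v * r ≤ v ^ 2 * min r (r ^ 2)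
    have h2 := exp_term_le (v * r)
    have h3 : v * r * (1 - Real.exp (-(v * r))) ≤ v ^ 2 * min r (r ^ 2) := by
      rcases le_total r 1 with hr1 | hr1
      · have hmin : min r (r ^ 2) = r ^ 2 := min_eq_right (by nlinarith)
        rw [hmin]
        have := one_sub_exp_le (v * r)
        have hx : 0 ≤ v * r := by positivity
        nlinarith
      · have hmin : min r (r ^ 2) = r := min_eq_left (by nlinarith)
        rw [hmin]
        have := @one_sub_exp_le_one (v * r)
        have hx : 0 ≤ v * r := by positivity
        nlinarith
    linarith
  rw [integral_const_mul] at h1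
  have := h.alpha_nonneg; have := h.beta_nonneg
  have hI := intmin_nonneg h
  have e1 : α * v ≤ α * v ^ 2 :=
    mul_le_mul_of_nonneg_left (by nlinarith : v ≤ v ^ 2) h.alpha_nonneg
  nlinarith

include h in
lemma psiDeriv_continuousAt {v₀ : ℝ} (hv₀ : 0 < v₀) :
    ContinuousAt (psiDeriv α β π) v₀ := by
  unfold psiDeriv
  apply ContinuousAt.add
  · fun_prop
  · apply continuousAt_of_dominated (bound := fun r => (v₀ + 2) * min r (r ^ 2))
    · exact Eventually.of_forall fun v => meas_deriv v
    · have hmem : Set.Ioo 0 (v₀ + 1) ∈ nhds v₀ :=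
        Ioo_mem_nhds hv₀ (by linarith)
      refine eventually_of_mem hmem fun v hv => ?_
      refine (ae_pos h).mono fun r hr => ?_
      have hb := deriv_bound hr (le_of_lt hv.1)
      have hm := min_nonneg_of_pos hr
      have : (v + 1) * min r (r ^ 2) ≤ (v₀ + 2) * min r (r ^ 2) :=
        mul_le_mul_of_nonneg_right (by linarith [hv.2]) hm
      linarith
    · exact h.integ_min.const_mul _
    · exact Eventually.of_forall fun r => by fun_prop

end S13

/-- Points `q ≥ 1` where `f(v)v^{-a}` over `[1,q]` is maximized at `q`. -/
def goodSet (f : ℝ → ℝ) (a : ℝ) : Set ℝ :=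
  {q : ℝ | 1 ≤ q ∧ ∀ v, 1 ≤ v → v ≤ q → f v * v ^ (-a) ≤ f q * q ^ (-a)}

section Records

variable {f : ℝ → ℝ} {a a' A₀ : ℝ}

lemma gcontAt (hcont : ∀ v : ℝ, 1 ≤ v → ContinuousAt f v) {v : ℝ} (hv : 1 ≤ v) :
    ContinuousAt (fun w : ℝ => f w * w ^ (-a)) v := by
  apply (hcont v hv).mul
  exact Real.continuousAt_rpow_const v (-a) (Or.inl (by linarith))

lemma one_mem_goodSet : (1 : ℝ) ∈ goodSet f a := by
  refine ⟨le_refl 1, fun v h1 h2 => ?_⟩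
  have : v = 1 := le_antisymm h2 h1
  rw [this]

lemma goodSet_closed (hcont : ∀ v : ℝ, 1 ≤ v → ContinuousAt f v) :
    IsClosed (goodSet f a) := by
  apply IsSeqClosed.isClosed
  intro x q hx hq
  have hq1 : (1 : ℝ) ≤ q := ge_of_tendsto hq (Eventually.of_forall fun n => (hx n).1)
  refine ⟨hq1, fun v hv1 hvq => ?_⟩
  rcases eq_or_lt_of_le hvq with rfl | hlt
  · exact le_refl _
  · have hev : ∀ᶠ n in atTop, f v * v ^ (-a) ≤ f (x n) * (x n) ^ (-a) := by
      filter_upwards [hq.eventually (eventually_gt_nhds hlt)] with n hn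
      exact (hx n).2 v hv1 hn.le
    have htend : Tendsto (fun n => f (x n) * (x n) ^ (-a)) atTop
        (nhds (f q * q ^ (-a))) := ((gcontAt hcont hq1).tendsto).comp hq
    exact ge_of_tendsto htend hev

lemma exists_argmax (hcont : ∀ v : ℝ, 1 ≤ v → ContinuousAt f v) {R : ℝ} (hR : 1 ≤ R) :
    ∃ m ∈ goodSet f a, m ≤ R ∧
      ∀ v ∈ Set.Icc 1 R, f v * v ^ (-a) ≤ f m * m ^ (-a) := by
  obtain ⟨m, hm, hmax⟩ := isCompact_Icc.exists_isMaxOn (s := Set.Icc (1:ℝ) R)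
    (Set.nonempty_Icc.mpr hR)
    (fun v hv => (gcontAt hcont hv.1).continuousWithinAt)
  exact ⟨m, ⟨hm.1, fun v h1 h2 => hmax ⟨h1, h2.trans hm.2⟩⟩, hm.2,
    fun v hv => hmax hv⟩

lemma goodSet_unbounded (hcont : ∀ v : ℝ, 1 ≤ v → ContinuousAt f v)
    (hgrow : ∀ v, A₀ ≤ v → v ^ a' ≤ f v) (hA₀ : 1 ≤ A₀) (ha : 0 ≤ a) (haa' : a < a') :
    ∀ w, 1 ≤ w → ∃ q ∈ goodSet f a, w ≤ q := by
  intro w hw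
  obtain ⟨m, hm, hmR, hmax⟩ := exists_argmax (a := a) hcont hw
  have h1 : Tendsto (fun v : ℝ => v ^ (a' - a)) atTop atTop :=
    tendsto_rpow_atTop (by linarith)
  have h2 : ∀ᶠ v : ℝ in atTop, f m * m ^ (-a) < v ^ (a' - a) :=
    h1.eventually_gt_atTop _
  obtain ⟨R, hR1, hR2, hR3⟩ :
      ∃ R : ℝ, max w A₀ ≤ R ∧ f m * m ^ (-a) < R ^ (a' - a) ∧ 1 ≤ R := by
    obtain ⟨R, hR⟩ := ((eventually_ge_atTop (max w A₀)).and
      (h2.and (eventually_ge_atTop (1:ℝ)))).exists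
    exact ⟨R, hR.1, hR.2.1, hR.2.2⟩
  have hRw : w ≤ R := le_trans (le_max_left _ _) hR1
  have hRA : A₀ ≤ R := le_trans (le_max_right _ _) hR1
  have hR0 : (0:ℝ) < R := by linarith
  have hgR : R ^ (a' - a) ≤ f R * R ^ (-a) := by
    have := hgrow R hRA
    have hpos : (0:ℝ) < R ^ (-a) := Real.rpow_pos_of_pos hR0 _
    calc R ^ (a' - a) = R ^ a' * R ^ (-a) := by
          rw [← Real.rpow_add hR0]; ring_nf
    _ ≤ f R * R ^ (-a) := mul_le_mul_of_nonneg_right this hpos.le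
  obtain ⟨m', hm', hm'R, hmax'⟩ := exists_argmax (a := a) hcont (hw.trans hRw)
  refine ⟨m', hm', ?_⟩
  by_contra hc
  push_neg at hc
  have : f m' * m' ^ (-a) ≤ f m * m ^ (-a) := hmax m' ⟨hm'.1, hc.le⟩
  have : f R * R ^ (-a) ≤ f m * m ^ (-a) :=
    le_trans (hmax' R ⟨hw.trans hRw, le_refl R⟩) this
  linarith
end Records

section Step

variable {f : ℝ → ℝ} {a a' A₀ : ℝ}

lemma step_lemma (hcont : ∀ v : ℝ, 1 ≤ v → ContinuousAt f v)
    (hmono : ∀ u v : ℝ, 1 ≤ u → u ≤ v → f u ≤ f v)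
    (hgrow : ∀ v, A₀ ≤ v → v ^ a' ≤ f v) (hA₀ : 1 ≤ A₀)
    (ha : 0 ≤ a) (haa' : a < a') (hf1 : 0 < f 1)
    {x T : ℝ} (hx : x ∈ goodSet f a) (hT : f x ≤ T) :
    ∃ z ∈ goodSet f a, x ≤ z ∧ T ≤ f z ∧ f z ≤ T * (z / x) ^ a := by
  have hx1 : (1:ℝ) ≤ x := hx.1
  have hx0 : (0:ℝ) < x := by linarith
  have hTpos : 0 < T := lt_of_lt_of_le (lt_of_lt_of_le hf1 (hmono 1 x le_rfl hx1)) hT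
  -- the set W of points past x where f exceeds T
  set W : Set ℝ := Set.Ici x ∩ f ⁻¹' (Set.Ici T) with hW
  have hWclosed : IsClosed W := by
    apply ContinuousOn.preimage_isClosed_of_isClosed ?_ isClosed_Ici isClosed_Ici
    exact fun v hv => (hcont v (hx1.trans hv)).continuousWithinAt
  have hWne : W.Nonempty := by
    have h1 : Tendsto (fun v : ℝ => v ^ a') atTop atTop := tendsto_rpow_atTop (by linarith)
    obtain ⟨v, hv⟩ := ((h1.eventually_ge_atTop T).and
      (eventually_ge_atTop (max x A₀))).exists
    refine ⟨v, le_trans (le_max_left _ _) hv.2, ?_⟩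
    exact le_trans hv.1 (hgrow v (le_trans (le_max_right _ _) hv.2))
  have hWbdd : BddBelow W := ⟨x, fun v hv => hv.1⟩
  set w := sInf W with hw
  have hwW : w ∈ W := hWclosed.csInf_mem hWne hWbdd
  have hxw : x ≤ w := hwW.1
  have hw1 : (1:ℝ) ≤ w := hx1.trans hxw
  have hTw : T ≤ f w := hwW.2
  have hlt : ∀ v, x ≤ v → v < w → f v < T := by
    intro v hv hvw
    by_contra hc
    push_neg at hc
    exact absurd (csInf_le hWbdd ⟨hv, hc⟩) (not_le.mpr hvw)
  -- u : the last good point before w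
  have hGclosed := goodSet_closed (a := a) hcont
  set U : Set ℝ := goodSet f a ∩ Set.Icc 1 w with hU
  have hUne : U.Nonempty := ⟨x, hx, hx1, hxw⟩
  have hUbdd : BddAbove U := ⟨w, fun y hy => hy.2.2⟩
  set u := sSup U with hu
  have huU : u ∈ U := (hGclosed.inter isClosed_Icc).csSup_mem hUne hUbdd
  have hxu : x ≤ u := le_csSup hUbdd ⟨hx, hx1, hxw⟩
  have hu1 : (1:ℝ) ≤ u := hx1.trans hxu
  have hu0 : (0:ℝ) < u := by linarith
  have huw : u ≤ w := huU.2.2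
  have hfu : f u ≤ T := by
    rcases lt_or_eq_of_le huw with hlt' | heq
    · exact (hlt u hxu hlt').le
    · rcases eq_or_lt_of_le hxw with heq2 | hlt2
      · have : u = x := le_antisymm (by rw [heq, ← heq2]) hxu
        rw [this]; exact hT
      · -- u = w,  x < w : use left continuity
        rw [heq]
        have htend : Tendsto f (nhdsWithin w (Set.Iio w)) (nhds (f w)) :=
          ((hcont w hw1).tendsto).mono_left nhdsWithin_le_nhds
        refine le_of_tendsto htend ?_
        have h1 : Set.Ioi x ∈ nhdsWithin w (Set.Iio w) :=
          nhdsWithin_le_nhds (Ioi_mem_nhds hlt2)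
        filter_upwards [h1, self_mem_nhdsWithin] with v hv1 hv2
        exact (hlt v (le_of_lt hv1) hv2).le
  -- z : the first good point after w
  set Z : Set ℝ := goodSet f a ∩ Set.Ici w with hZ
  have hZne : Z.Nonempty := by
    obtain ⟨q, hq, hwq⟩ := goodSet_unbounded hcont hgrow hA₀ ha haa' w hw1
    exact ⟨q, hq, hwq⟩
  have hZbdd : BddBelow Z := ⟨w, fun y hy => hy.2⟩
  set z := sInf Z with hz
  have hzZ : z ∈ Z := (hGclosed.inter isClosed_Ici).csInf_mem hZne hZbdd
  have hzgood : z ∈ goodSet f a := hzZ.1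
  have hwz : w ≤ z := hzZ.2
  have hz1 : (1:ℝ) ≤ z := hw1.trans hwz
  have hz0 : (0:ℝ) < z := by linarith
  have hxz : x ≤ z := hxw.trans hwz
  have hTz : T ≤ f z := hTw.trans (hmono w z hw1 hwz)
  -- key : before z, the running max of  f v * v^{-a}  is attained on [1,u]
  have key : ∀ v, 1 ≤ v → v < z → f v * v ^ (-a) ≤ f u * u ^ (-a) := by
    intro v hv1 hvz
    by_contra hc
    push_neg at hc
    obtain ⟨m, hm, hmv, hmax⟩ := exists_argmax (a := a) hcont hv1
    have hmgu : f u * u ^ (-a) < f m * m ^ (-a) :=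
      lt_of_lt_of_le hc (hmax v ⟨hv1, le_refl v⟩)
    rcases le_or_gt m w with hmw | hwm
    · have hmu : m ≤ u := le_csSup hUbdd ⟨hm, hm.1, hmw⟩
      have := huU.1.2 m hm.1 hmu
      linarith
    · have : z ≤ m := csInf_le hZbdd ⟨hm, hwm.le⟩
      have : v < v := lt_of_lt_of_le hvz (this.trans hmv)
      exact lt_irrefl v this
  have huz : u ≤ z := huw.trans hwz
  have hgzu : f z * z ^ (-a) ≤ f u * u ^ (-a) := by
    rcases eq_or_lt_of_le huz with heq | hlt'
    · rw [← heq]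
    · have htend : Tendsto (fun v => f v * v ^ (-a)) (nhdsWithin z (Set.Iio z))
          (nhds (f z * z ^ (-a))) :=
        ((gcontAt hcont hz1).tendsto).mono_left nhdsWithin_le_nhds
      refine le_of_tendsto htend ?_
      have h1 : Set.Ioi u ∈ nhdsWithin z (Set.Iio z) :=
        nhdsWithin_le_nhds (Ioi_mem_nhds hlt')
      filter_upwards [h1, self_mem_nhdsWithin] with v hv1 hv2
      exact key v (hu1.trans hv1.le) hv2
  -- conclude
  refine ⟨z, hzgood, hxz, hTz, ?_⟩
  have h1 : f z * z ^ (-a) ≤ T * u ^ (-a) :=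
    le_trans hgzu (mul_le_mul_of_nonneg_right hfu (Real.rpow_pos_of_pos hu0 _).le)
  have h2 : f z = f z * z ^ (-a) * z ^ a := by
    rw [mul_assoc, ← Real.rpow_add hz0]
    simp
  rw [h2]
  calc f z * z ^ (-a) * z ^ a ≤ T * u ^ (-a) * z ^ a :=
        mul_le_mul_of_nonneg_right h1 (Real.rpow_pos_of_pos hz0 _).le
  _ = T * (z / u) ^ a := by
        rw [Real.div_rpow hz0.le hu0.le, Real.rpow_neg hu0.le]
        ring
  _ ≤ T * (z / x) ^ a := by
        apply mul_le_mul_of_nonneg_left ?_ hTpos.le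
        apply Real.rpow_le_rpow (by positivity) ?_ ha
        exact div_le_div_of_nonneg_left hz0.le hx0 hxu
end Step

namespace S13
variable {α β : ℝ} {π : Measure ℝ} (h : IsBranchingMechanism α β π)

include h in
lemma psi_one_pos (hex : ∃ l : ℝ, 1 ≤ l ∧ 0 < psiFun α β π l) :
    0 < psiFun α β π 1 := by
  obtain ⟨l, hl1, hlpos⟩ := hex
  by_contra hc
  push_neg at hc
  have h0 : psiFun α β π 1 = 0 := le_antisymm hc (psi_nonneg h zero_le_one)
  have hInonneg : 0 ≤ ∫ r, (Real.exp (-(1 * r)) - 1 + 1 * r) ∂π :=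
    integral_nonneg fun r => exp_term_nonneg _
  unfold psiFun at h0
  have hα : α = 0 := by nlinarith [h.alpha_nonneg, h.beta_nonneg]
  have hβ : β = 0 := by nlinarith [h.alpha_nonneg, h.beta_nonneg]
  have hI : ∫ r, (Real.exp (-(1 * r)) - 1 + 1 * r) ∂π = 0 := by
    rw [hα, hβ] at h0; linarith [h0]
  have hae : (fun r : ℝ => Real.exp (-(1 * r)) - 1 + 1 * r) =ᵐ[π] 0 := by
    rw [← integral_eq_zero_iff_of_nonneg_ae
      (Eventually.of_forall fun r => exp_term_nonneg (1 * r)) (integ_fun h zero_le_one)]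
    exact hI
  have habs : ∀ᵐ r ∂π, False := by
    filter_upwards [hae, ae_pos h] with r hr hrpos
    have h1 : Real.exp (-(1 * r)) - 1 + 1 * r = 0 := hr
    have h2 : -(1 * r) + 1 < Real.exp (-(1 * r)) :=
      Real.add_one_lt_exp (by simp; linarith)
    linarith
  have hπ : π = 0 := by
    rw [← Measure.measure_univ_eq_zero]
    have := ae_iff.mp habs
    simpa using this
  rw [hπ] at hlpos
  unfold psiFun at hlpos
  rw [hα, hβ] at hlpos
  simp at hlpos

end S13

namespace S13
variable {α β : ℝ} {π : Measure ℝ} (h : IsBranchingMechanism α β π)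

include h in
lemma psi_rpow_bound {c l : ℝ} (hl : 1 ≤ l) :
    psiFun α β π l * l ^ (-c) ≤ (α + β + ∫ r, min r (r ^ 2) ∂π) * l ^ (2 - c) := by
  have hl0 : (0:ℝ) < l := by linarith
  have h1 : psiFun α β π l ≤ (α + β + ∫ r, min r (r ^ 2) ∂π) * l ^ 2 := psi_quad h hl
  have h2 := Real.rpow_pos_of_pos hl0 (-c)
  calc psiFun α β π l * l ^ (-c)
      ≤ ((α + β + ∫ r, min r (r ^ 2) ∂π) * l ^ 2) * l ^ (-c) :=
        mul_le_mul_of_nonneg_right h1 h2.le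
  _ = (α + β + ∫ r, min r (r ^ 2) ∂π) * l ^ (2 - c) := by
      rw [mul_assoc, ← Real.rpow_natCast l 2, ← Real.rpow_add hl0]
      norm_num [sub_eq_add_neg]

include h in
lemma growth_from_delta (hδ : 1 < deltaIndex (psiFun α β π)) :
    ∃ c D l₀ : ℝ, 1 < c ∧ 0 < D ∧ 1 ≤ l₀ ∧ (0 < psiFun α β π l₀) ∧
      ∀ l, l₀ ≤ l → D * l ^ c ≤ psiFun α β π l := by
  set ψ := psiFun α β π with hψdef
  set S := {c : ℝ | 0 ≤ c ∧ ∃ C : ℝ, 0 < C ∧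
    ∀ μ l : ℝ, 1 ≤ μ → μ ≤ l → C * (ψ μ * μ ^ (-c)) ≤ ψ l * l ^ (-c)} with hS
  have hSsup : deltaIndex ψ = sSup S := rfl
  have hSne : S.Nonempty := by
    by_contra hc
    rw [Set.not_nonempty_iff_eq_empty] at hc
    rw [hSsup, hc, Real.sSup_empty] at hδ; linarith
  have hex : ∃ l : ℝ, 1 ≤ l ∧ 0 < ψ l := by
    by_contra hc
    push_neg at hc
    have hzero : ∀ l : ℝ, 1 ≤ l → ψ l = 0 := fun l hl =>
      le_antisymm (hc l hl) (psi_nonneg h (by linarith))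
    have hsub : ∀ c : ℝ, 0 ≤ c → c ∈ S := by
      intro c hc0
      refine ⟨hc0, 1, one_pos, fun μ l h1 h2 => ?_⟩
      rw [hzero μ h1, hzero l (h1.trans h2)]; simp
    have hnb : ¬ BddAbove S := by
      rintro ⟨M, hM⟩
      have h1 := hM (hsub (max M 0 + 1) (by positivity))
      have := le_max_left M 0
      linarith
    rw [hSsup, Real.sSup_of_not_bddAbove hnb] at hδ; linarith
  obtain ⟨l₀, hl₀, hψl₀⟩ := hex
  have hbdd : BddAbove S := by
    refine ⟨3, fun c hcS => ?_⟩
    by_contra hc3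
    push_neg at hc3
    obtain ⟨hc0, C, hC, hquasi⟩ := hcS
    set D := C * (ψ l₀ * l₀ ^ (-c)) with hD
    have hDpos : 0 < D := by
      have := Real.rpow_pos_of_pos (show (0:ℝ) < l₀ by linarith) (-c)
      positivity
    set I := α + β + ∫ r, min r (r ^ 2) ∂π with hI
    have hInn : 0 ≤ I := by
      have := h.alpha_nonneg; have := h.beta_nonneg; have := intmin_nonneg h
      positivity
    set l := max l₀ ((I + 1) / D) with hl
    have hll₀ : l₀ ≤ l := le_max_left _ _
    have hl1 : 1 ≤ l := hl₀.trans hll₀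
    have hl0 : (0:ℝ) < l := by linarith
    have h1 : D ≤ ψ l * l ^ (-c) := hquasi l₀ l hl₀ hll₀
    have h2 : ψ l * l ^ (-c) ≤ I * l ^ (2 - c) := psi_rpow_bound h hl1
    have h3 : l ^ (2 - c) ≤ l ^ (-1 : ℝ) :=
      Real.rpow_le_rpow_of_exponent_le hl1 (by linarith)
    have h4 : I * l ^ (2 - c) ≤ I * l ^ (-1:ℝ) := mul_le_mul_of_nonneg_left h3 hInn
    have h5 : l ^ (-1:ℝ) = l⁻¹ := Real.rpow_neg_one l
    have h6 : (I + 1) / D ≤ l := le_max_right _ _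
    have h7 : D * l ≤ I := by
      have h9 : D ≤ I * l⁻¹ := by rw [← h5]; linarith
      calc D * l ≤ (I * l⁻¹) * l := mul_le_mul_of_nonneg_right h9 hl0.le
      _ = I := by field_simp
    have h8 : I + 1 ≤ D * l := by
      calc I + 1 = D * ((I+1)/D) := by field_simp
      _ ≤ D * l := mul_le_mul_of_nonneg_left h6 hDpos.le
    linarith
  obtain ⟨c, hcS, hc1⟩ := exists_lt_of_lt_csSup hSne (by rw [← hSsup]; exact hδ)
  obtain ⟨hc0, C, hC, hquasi⟩ := hcS
  refine ⟨c, C * (ψ l₀ * l₀ ^ (-c)), l₀, hc1, ?_, hl₀, hψl₀, ?_⟩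
  · have := Real.rpow_pos_of_pos (show (0:ℝ) < l₀ by linarith) (-c); positivity
  · intro l hl
    have hl0 : (0:ℝ) < l := by linarith
    have h1 := hquasi l₀ l hl₀ hl
    calc C * (ψ l₀ * l₀ ^ (-c)) * l ^ c ≤ ψ l * l ^ (-c) * l ^ c :=
      mul_le_mul_of_nonneg_right h1 (Real.rpow_pos_of_pos hl0 c).le
    _ = ψ l := by rw [mul_assoc, ← Real.rpow_add hl0]; simp

include h in
lemma gamma_facts (hδ : 1 < deltaIndex (psiFun α β π)) :
    1 < lowerIndex (psiFun α β π) ∧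
    ∀ c₀ : ℝ, 0 ≤ c₀ → c₀ < lowerIndex (psiFun α β π) →
      Tendsto (fun l : ℝ => psiFun α β π l * l ^ (-c₀)) atTop atTop := by
  set ψ := psiFun α β π with hψdef
  obtain ⟨c, D, l₀, hc1, hD, hl₀, hψl₀, hgrow⟩ := growth_from_delta h hδ
  set S := {c : ℝ | 0 ≤ c ∧ Tendsto (fun l : ℝ => ψ l * l ^ (-c)) atTop atTop} with hS
  have hsup : lowerIndex ψ = sSup S := rfl
  set I := α + β + ∫ r, min r (r ^ 2) ∂π with hI
  have hInn : 0 ≤ I := by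
    have := h.alpha_nonneg; have := h.beta_nonneg; have := intmin_nonneg h
    positivity
  have hmem : ∀ c₀ : ℝ, 0 ≤ c₀ → c₀ < c → c₀ ∈ S := by
    intro c₀ h0 hlt
    refine ⟨h0, ?_⟩
    have htend : Tendsto (fun l : ℝ => D * l ^ (c - c₀)) atTop atTop :=
      (tendsto_rpow_atTop (by linarith)).const_mul_atTop hD
    refine tendsto_atTop_mono' atTop ?_ htend
    filter_upwards [eventually_ge_atTop (max l₀ 1)] with l hl
    have hll : l₀ ≤ l := le_trans (le_max_left _ _) hl
    have hl1 : (1:ℝ) ≤ l := le_trans (le_max_right _ _) hl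
    have hl0 : (0:ℝ) < l := by linarith
    have h1 : D * l ^ c ≤ ψ l := hgrow l hll
    calc D * l ^ (c - c₀) = D * l ^ c * l ^ (-c₀) := by
          rw [mul_assoc, ← Real.rpow_add hl0]; ring_nf
    _ ≤ ψ l * l ^ (-c₀) :=
      mul_le_mul_of_nonneg_right h1 (Real.rpow_pos_of_pos hl0 _).le
  have hSne : S.Nonempty := ⟨0, hmem 0 le_rfl (by linarith)⟩
  have hSbdd : BddAbove S := by
    refine ⟨3, fun c' hc' => ?_⟩
    by_contra hc3
    push_neg at hc3
    obtain ⟨hc0', htend⟩ := hc'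
    have hev := (htend.eventually_ge_atTop (I + 1)).and (eventually_ge_atTop (1:ℝ))
    obtain ⟨l, hl1, hl2⟩ := hev.exists
    have hb : ψ l * l ^ (-c') ≤ I * l ^ (2 - c') := psi_rpow_bound h hl2
    have h3 : l ^ (2 - c') ≤ l ^ (0 : ℝ) :=
      Real.rpow_le_rpow_of_exponent_le hl2 (by linarith)
    rw [Real.rpow_zero] at h3
    have h4 : I * l ^ (2 - c') ≤ I := by
      calc I * l ^ (2 - c') ≤ I * 1 := mul_le_mul_of_nonneg_left h3 hInn
      _ = I := mul_one I
    linarith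
  have hγc : c ≤ lowerIndex ψ := by
    by_contra hcon
    push_neg at hcon
    set c₀ := max ((lowerIndex ψ + c)/2) 0 with hc₀
    have h0 : 0 ≤ c₀ := le_max_right _ _
    have hlt : c₀ < c := max_lt (by linarith) (by linarith)
    have hle := le_csSup hSbdd (hmem c₀ h0 hlt)
    rw [← hsup] at hle
    have hgt : lowerIndex ψ < c₀ :=
      lt_of_lt_of_le (by linarith) (le_max_left ((lowerIndex ψ + c)/2) 0)
    linarith
  refine ⟨by linarith, fun c₀ h0 hlt => ?_⟩
  obtain ⟨s, hsS, hs⟩ := exists_lt_of_lt_csSup hSne (by rw [← hsup]; exact hlt)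
  refine tendsto_atTop_mono' atTop ?_ hsS.2
  filter_upwards [eventually_ge_atTop (1:ℝ)] with l hl1
  have hl0 : (0:ℝ) < l := by linarith
  have h1 : l ^ (-s) ≤ l ^ (-c₀) :=
    Real.rpow_le_rpow_of_exponent_le hl1 (by linarith)
  exact mul_le_mul_of_nonneg_left h1 (psi_nonneg h (by linarith))

end S13

/-- if δ > 1 and d > 2γ/(γ−1), there are radii (ρ_n)_{n≥1} in
(0, (K/ψ′(1))^{1/2}) with ρ_{n+1} ≤ e^{−n}ρ_n, sup_{n≥1} n^{−2} log(1/ρ_n) < ∞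
and J(ρ_n) ≤ C for all n ≥ 1. -/
theorem statement13 (α β : ℝ) (π : Measure ℝ) (h : IsBranchingMechanism α β π)
    (hδ : 1 < deltaIndex (psiFun α β π))
    (d : ℕ)
    (hd : 2 * lowerIndex (psiFun α β π) / (lowerIndex (psiFun α β π) - 1) < (d : ℝ))
    (K : ℝ) (hK : 0 < K)
    (ψ'inv : ℝ → ℝ)
    (hψ'inv : ∀ x : ℝ, α ≤ x → 0 ≤ ψ'inv x ∧ psiDeriv α β π (ψ'inv x) = x)
    (hψ'inv' : ∀ y : ℝ, 0 ≤ y → ψ'inv (psiDeriv α β π y) = y) :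
    ∃ (ρ : ℕ → ℝ) (C : ℝ), 0 < C ∧
      (∀ n : ℕ, 1 ≤ n → 0 < ρ n ∧ ρ n < Real.sqrt (K / psiDeriv α β π 1)) ∧
      (∀ n : ℕ, 1 ≤ n → ρ (n + 1) ≤ Real.exp (-(n : ℝ)) * ρ n) ∧
      (∃ M : ℝ, ∀ n : ℕ, 1 ≤ n → ((n : ℝ))⁻¹ ^ 2 * Real.log (1 / ρ n) ≤ M) ∧
      (∀ n : ℕ, 1 ≤ n → Jfun α β π ψ'inv K d (ρ n) ≤ C) := by
  classical
  set F := psiDeriv α β π with hFdef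
  set ψ := psiFun α β π with hψdef
  set γ := lowerIndex ψ with hγdef
  obtain ⟨hγ1, hγmem⟩ := S13.gamma_facts h hδ
  have hγpos : (0:ℝ) < γ - 1 := by linarith
  have hd2 : (2:ℝ) < (d:ℝ) := by
    have h1 : 2 * γ / (γ - 1) = 2 + 2 / (γ - 1) := by field_simp; ring
    rw [h1] at hd
    have h2 : 0 < 2 / (γ - 1) := by positivity
    linarith
  set p := (d:ℝ)/((d:ℝ)-2) with hpdef
  have hd20 : (0:ℝ) < (d:ℝ) - 2 := by linarith
  have hp1 : 1 < p := by rw [hpdef, lt_div_iff₀ hd20]; linarith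
  have hpγ : p < γ := by
    rw [hpdef, div_lt_iff₀ hd20]
    have h2γ : 2 * γ < (d:ℝ) * (γ - 1) := (div_lt_iff₀ hγpos).mp hd
    nlinarith
  set a' := (p - 1 + (γ - 1))/2 with ha'def
  set a := (p - 1 + a')/2 with hadef
  have hpa : p - 1 < a := by rw [hadef, ha'def]; linarith
  have haa' : a < a' := by rw [hadef, ha'def]; linarith
  have ha'γ : a' + 1 < γ := by rw [ha'def]; linarith
  have hapos : (0:ℝ) < a := by rw [hadef, ha'def]; linarith
  have ha'pos : (0:ℝ) < a' := by rw [ha'def]; linarith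
  -- growth of F at infinity
  obtain ⟨A₁, hA₁⟩ := Filter.eventually_atTop.mp
    ((hγmem (a' + 1) (by linarith) (by linarith)).eventually_ge_atTop 1)
  set A₀ := max A₁ 1 with hA₀def
  have hA₀1 : (1:ℝ) ≤ A₀ := le_max_right _ _
  have hgrowF : ∀ v, A₀ ≤ v → v ^ a' ≤ F v := by
    intro v hv
    have hv1 : (1:ℝ) ≤ v := hA₀1.trans hv
    have hv0 : (0:ℝ) < v := by linarith
    have h1 : 1 ≤ ψ v * v ^ (-(a'+1)) := hA₁ v (le_trans (le_max_left _ _) hv)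
    have h2 : v ^ (a' + 1) ≤ ψ v := by
      have h3 := mul_le_mul_of_nonneg_right h1 (Real.rpow_pos_of_pos hv0 (a'+1)).le
      rw [one_mul, mul_assoc, ← Real.rpow_add hv0,
        show -(a'+1) + (a'+1) = (0:ℝ) by ring, Real.rpow_zero, mul_one] at h3
      exact h3
    have h4 : ψ v ≤ v * F v := S13.psi_le h (by linarith)
    have h5 : v ^ (a' + 1) = v * v ^ a' := by
      rw [Real.rpow_add hv0, Real.rpow_one]; ring
    have h6 : v * v ^ a' ≤ v * F v := by rw [← h5]; linarith
    exact le_of_mul_le_mul_left h6 hv0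
  -- basic F facts
  have hcont : ∀ v : ℝ, 1 ≤ v → ContinuousAt F v := fun v hv =>
    S13.psiDeriv_continuousAt h (by linarith)
  have hmono : ∀ u v : ℝ, 1 ≤ u → u ≤ v → F u ≤ F v := fun u v h1 h2 =>
    S13.psiDeriv_mono h (by linarith) h2
  have hψ1 : 0 < ψ 1 := by
    obtain ⟨c, D, l₀, _, _, hl₀, hψl₀, _⟩ := S13.growth_from_delta h hδ
    exact S13.psi_one_pos h ⟨l₀, hl₀, hψl₀⟩
  have hF1 : 0 < F 1 := by
    have h1 : ψ 1 ≤ 1 * F 1 := S13.psi_le h zero_le_one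
    rw [one_mul] at h1; linarith
  -- the step function
  have hstepL := fun {x T : ℝ} (hx : x ∈ goodSet F a) (hT : F x ≤ T) =>
    step_lemma hcont hmono hgrowF hA₀1 hapos.le haa' hF1 hx hT
  have hex : ∀ (n : ℕ) (x : {y : ℝ // y ∈ goodSet F a}),
      ∃ z : {y : ℝ // y ∈ goodSet F a},
        Real.exp (2*((n:ℝ)+1)) * F x.1 ≤ F z.1 ∧
        F z.1 ≤ Real.exp (2*((n:ℝ)+1)) * F x.1 * (z.1/x.1) ^ a := by
    intro n x
    have hx1 : (1:ℝ) ≤ x.1 := x.2.1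
    have hFx : 0 < F x.1 := lt_of_lt_of_le hF1 (hmono 1 x.1 le_rfl hx1)
    have hone : (1:ℝ) ≤ Real.exp (2*((n:ℝ)+1)) := Real.one_le_exp (by positivity)
    have hT : F x.1 ≤ Real.exp (2*((n:ℝ)+1)) * F x.1 := by
      have h2 := mul_le_mul_of_nonneg_right hone hFx.le
      rw [one_mul] at h2
      exact h2
    obtain ⟨z, hz, _, h2, h3⟩ := hstepL x.2 hT
    exact ⟨⟨z, hz⟩, h2, h3⟩
  choose Φ hΦ1 hΦ2 using hex
  have hbase : ∃ z : {y : ℝ // y ∈ goodSet F a}, F 1 + 1 ≤ F z.1 := by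
    obtain ⟨z, hz, _, h2, _⟩ := hstepL (one_mem_goodSet (f := F) (a := a))
      (show F 1 ≤ F 1 + 1 by linarith)
    exact ⟨⟨z, hz⟩, h2⟩
  obtain ⟨z₀, hz₀⟩ := hbase
  obtain ⟨Q, hQ0, hQs⟩ : ∃ Q : ℕ → {y : ℝ // y ∈ goodSet F a},
      Q 0 = z₀ ∧ ∀ n, Q (n+1) = Φ n (Q n) :=
    ⟨fun n => Nat.rec z₀ (fun k prev => Φ k prev) n, rfl, fun n => rfl⟩
  set q : ℕ → ℝ := fun n => (Q n).1 with hqdef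
  have hq1 : ∀ n, (1:ℝ) ≤ q n := fun n => (Q n).2.1
  have hqpos : ∀ n, (0:ℝ) < q n := fun n => lt_of_lt_of_le one_pos (hq1 n)
  have hqgood : ∀ n, q n ∈ goodSet F a := fun n => (Q n).2
  have hstep1 : ∀ n : ℕ, Real.exp (2*((n:ℝ)+1)) * F (q n) ≤ F (q (n+1)) := by
    intro n
    have := hΦ1 n (Q n)
    simpa [hqdef, hQs n] using this
  have hstep2 : ∀ n : ℕ,
      F (q (n+1)) ≤ Real.exp (2*((n:ℝ)+1)) * F (q n) * (q (n+1) / q n) ^ a := by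
    intro n
    have := hΦ2 n (Q n)
    simpa [hqdef, hQs n] using this
  have hFpos : ∀ n, 0 < F (q n) := fun n =>
    lt_of_lt_of_le hF1 (hmono 1 _ le_rfl (hq1 n))
  have hFq0 : F 1 + 1 ≤ F (q 0) := by
    have he : q 0 = z₀.1 := by simp only [hqdef, hQ0]
    rw [he]; exact hz₀
  have hmonoF : ∀ n, F (q n) ≤ F (q (n+1)) := by
    intro n
    have h1 := hstep1 n
    have hone : (1:ℝ) ≤ Real.exp (2*((n:ℝ)+1)) := Real.one_le_exp (by positivity)
    have h2 := mul_le_mul_of_nonneg_right hone (hFpos n).le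
    rw [one_mul] at h2
    linarith only [h1, h2]
  have hF0le : ∀ n, F (q 0) ≤ F (q n) := by
    intro n
    induction n with
    | zero => exact le_rfl
    | succ k ih => exact ih.trans (hmonoF k)
  have hF1lt : ∀ n, F 1 < F (q n) := by
    intro n
    induction n with
    | zero => linarith
    | succ k ih => linarith [hmonoF k]
  -- logs and the budget
  set L : ℕ → ℝ := fun n => Real.log (F (q n)) with hLdef
  set X : ℕ → ℝ := fun n => Real.log (q n) with hXdef
  have hLpos : ∀ n, 0 < L n := by
    intro n
    apply Real.log_pos
    linarith only [hF1, hFq0, hF0le n]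
  have hsteplog : ∀ n : ℕ, L (n+1) ≤ 2*((n:ℝ)+1) + L n + a * (X (n+1) - X n) := by
    intro n
    have h2 := hstep2 n
    have hq0 := hqpos n
    have hq0' := hqpos (n+1)
    have hdivpos : 0 < q (n+1) / q n := by positivity
    have hlog := Real.log_le_log (hFpos (n+1)) h2
    rw [Real.log_mul (ne_of_gt (mul_pos (Real.exp_pos _) (hFpos n)))
          (ne_of_gt (Real.rpow_pos_of_pos hdivpos a)),
        Real.log_mul (Real.exp_ne_zero _) (ne_of_gt (hFpos n)),
        Real.log_exp, Real.log_rpow hdivpos,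
        Real.log_div (ne_of_gt hq0') (ne_of_gt hq0)] at hlog
    simp only [hLdef, hXdef]
    linarith only [hlog]
  have htel : ∀ N : ℕ, L N ≤ L 0 + (N:ℝ)*((N:ℝ)+1) + a * (X N - X 0) := by
    intro N
    induction N with
    | zero => simp
    | succ k ih =>
      have h1 := hsteplog k
      have hcast : ((k+1 : ℕ):ℝ) = (k:ℝ)+1 := by push_cast; ring
      rw [hcast]
      have hexp : ((k:ℝ)+1)*(((k:ℝ)+1)+1) = (k:ℝ)*((k:ℝ)+1) + 2*((k:ℝ)+1) := by ring
      linarith only [h1, ih, hexp]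
  have hX0 : 0 ≤ X 0 := Real.log_nonneg (hq1 0)
  have hXbound : ∀ n, X n ≤ Real.log A₀ + L n / a' := by
    intro n
    rcases le_or_gt A₀ (q n) with hc | hc
    · have h1 : (q n) ^ a' ≤ F (q n) := hgrowF _ hc
      have h2 : a' * X n ≤ L n := by
        have h3 := Real.log_le_log (Real.rpow_pos_of_pos (hqpos n) a') h1
        rwa [Real.log_rpow (hqpos n)] at h3
      have h3 : X n ≤ L n / a' := by
        rw [le_div_iff₀ ha'pos]; linarith
      have h4 : 0 ≤ Real.log A₀ := Real.log_nonneg hA₀1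
      linarith
    · have h1 : X n ≤ Real.log A₀ := Real.log_le_log (hqpos n) hc.le
      have h2 : 0 ≤ L n / a' := le_of_lt (div_pos (hLpos n) ha'pos)
      linarith
  have hκ : 0 < 1 - a/a' := by
    have : a/a' < 1 := (div_lt_one ha'pos).mpr haa'
    linarith
  set B := L 0 + a * Real.log A₀ with hBdef
  have hBpos : 0 < B := by
    have h1 := mul_nonneg hapos.le (Real.log_nonneg hA₀1)
    have h2 := hLpos 0
    rw [hBdef]
    linarith only [h1, h2]
  have hbudget : ∀ N : ℕ, L N ≤ (B + (N:ℝ)*((N:ℝ)+1)) / (1 - a/a') := by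
    intro N
    have h1 := htel N
    have h2 := hXbound N
    have h3 : a * X N ≤ a * (Real.log A₀ + L N / a') :=
      mul_le_mul_of_nonneg_left h2 hapos.le
    have h5 : a * (L N / a') = (a/a') * L N := by ring
    have h6 : 0 ≤ a * X 0 := mul_nonneg hapos.le hX0
    have h4 : L N ≤ B + (N:ℝ)*((N:ℝ)+1) + (a/a') * L N := by
      have hdist : a * (Real.log A₀ + L N / a') = a * Real.log A₀ + a * (L N / a') := by ring
      rw [hBdef]
      linarith only [h1, h3, h5, h6, hdist]
    rw [le_div_iff₀ hκ]
    have hexp2 : L N * (1 - a/a') = L N - (a/a') * L N := by ring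
    linarith only [h4, hexp2]
  -- the radii
  set ρ : ℕ → ℝ := fun n => Real.sqrt (K / F (q (n-1))) with hρdef
  clear_value a
  clear_value a'
  clear_value p
  clear_value γ
  clear_value A₀
  clear_value F
  clear_value ψ
  have hCpos : 0 < K / (a + 1 - p) := by
    have : 0 < a + 1 - p := by linarith
    positivity
  refine ⟨ρ, K / (a + 1 - p), hCpos, ?_, ?_, ?_, ?_⟩
  · -- positivity and upper bound on radii
    intro n hn
    constructor
    · exact Real.sqrt_pos.mpr (div_pos hK (hFpos (n-1)))
    · apply Real.sqrt_lt_sqrt (div_pos hK (hFpos (n-1))).le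
      exact div_lt_div_of_pos_left hK hF1 (hF1lt (n-1))
  · -- geometric decay
    intro n hn
    obtain ⟨m, rfl⟩ : ∃ m, n = m + 1 := ⟨n - 1, (Nat.succ_pred_eq_of_pos hn).symm⟩
    have hFm := hFpos m
    have hFm1 := hFpos (m+1)
    have h1 := hstep1 m
    have hEpos : (0:ℝ) < Real.exp (2*((m:ℝ)+1)) := Real.exp_pos _
    have h2 : K / F (q (m+1)) ≤ Real.exp (-(2*((m:ℝ)+1))) * (K / F (q m)) := by
      have h3 : K / F (q (m+1)) ≤ K / (Real.exp (2*((m:ℝ)+1)) * F (q m)) :=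
        div_le_div_of_nonneg_left hK.le (mul_pos (Real.exp_pos _) hFm) h1
      have h4 : K / (Real.exp (2*((m:ℝ)+1)) * F (q m))
          = Real.exp (-(2*((m:ℝ)+1))) * (K / F (q m)) := by
        rw [Real.exp_neg]
        field_simp
      linarith
    have hsqrtexp : Real.sqrt (Real.exp (-(2*((m:ℝ)+1)))) = Real.exp (-((m:ℝ)+1)) := by
      rw [show (-(2*((m:ℝ)+1))) = (-((m:ℝ)+1)) + (-((m:ℝ)+1)) by ring, Real.exp_add,
        Real.sqrt_mul_self (Real.exp_nonneg _)]
    have hidx : (m + 1 + 1 : ℕ) - 1 = m + 1 := rfl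
    have hidx2 : (m + 1 : ℕ) - 1 = m := rfl
    calc ρ (m+1+1) = Real.sqrt (K / F (q (m+1))) := by
          simp only [hρdef, Nat.add_sub_cancel]
    _ ≤ Real.sqrt (Real.exp (-(2*((m:ℝ)+1))) * (K / F (q m))) := Real.sqrt_le_sqrt h2
    _ = Real.exp (-((m:ℝ)+1)) * Real.sqrt (K / F (q m)) := by
        rw [Real.sqrt_mul (Real.exp_nonneg _), hsqrtexp]
    _ = Real.exp (-((m+1:ℕ):ℝ)) * ρ (m+1) := by
        rw [hρdef]
        push_cast
        norm_num
  · -- the n⁻² log bound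
    refine ⟨(B + 2)/(1 - a/a') + |Real.log K|, ?_⟩
    intro n hn
    obtain ⟨m, rfl⟩ : ∃ m, n = m + 1 := ⟨n - 1, (Nat.succ_pred_eq_of_pos hn).symm⟩
    have hFm := hFpos m
    have hρpos : 0 < ρ (m+1) := by
      simp only [hρdef, Nat.add_sub_cancel]
      exact Real.sqrt_pos.mpr (div_pos hK (hFpos m))
    have hlog1 : Real.log (1 / ρ (m+1)) = (L m - Real.log K) / 2 := by
      rw [one_div, Real.log_inv]
      simp only [hρdef, Nat.add_sub_cancel]
      rw [Real.log_sqrt (div_pos hK hFm).le, Real.log_div (ne_of_gt hK) (ne_of_gt hFm)]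
      simp only [hLdef]
      ring
    set N := ((m+1:ℕ):ℝ) with hNdef
    have hN1 : (1:ℝ) ≤ N := by rw [hNdef]; push_cast; linarith [Nat.cast_nonneg (α := ℝ) m]
    have hN2 : (1:ℝ) ≤ N^2 := by nlinarith only [hN1]
    have hN0 : N ≠ 0 := by intro hc; rw [hc] at hN1; linarith
    have hLm : L m ≤ (B + N^2)/(1 - a/a') := by
      have h1 := hbudget m
      have h2 : (m:ℝ)*((m:ℝ)+1) ≤ N^2 := by
        rw [hNdef]; push_cast
        nlinarith only [Nat.cast_nonneg (α := ℝ) m]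
      have h3 : (B + (m:ℝ)*((m:ℝ)+1)) / (1 - a/a') ≤ (B + N^2) / (1 - a/a') :=
        (div_le_div_iff_of_pos_right hκ).mpr (by linarith)
      linarith
    have hx : 0 ≤ (B + N^2)/(1 - a/a') := by positivity
    have habs := neg_le_abs (Real.log K)
    have habs0 := abs_nonneg (Real.log K)
    have hMN : Real.log (1/ρ (m+1)) ≤ ((B+2)/(1 - a/a') + |Real.log K|) * N^2 := by
      rw [hlog1]
      have e1 : (L m - Real.log K)/2 ≤ (B + N^2)/(1-a/a') + |Real.log K| := by
        linarith only [hLm, habs, habs0, hx]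
      have k1 : (B + N^2)/(1-a/a') ≤ ((B+2)/(1-a/a'))*N^2 := by
        rw [div_mul_eq_mul_div]
        refine (div_le_div_iff_of_pos_right hκ).mpr ?_
        nlinarith only [hBpos, hN2]
      have k2 : |Real.log K| ≤ |Real.log K| * N^2 := by
        nlinarith only [habs0, hN2]
      linarith only [e1, k1, k2, hLm, habs, habs0]
    calc N⁻¹^2 * Real.log (1/ρ (m+1))
        ≤ N⁻¹^2 * (((B+2)/(1-a/a') + |Real.log K|) * N^2) :=
          mul_le_mul_of_nonneg_left hMN (by positivity)
    _ = (B+2)/(1-a/a') + |Real.log K| := by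
        field_simp
  · -- the J bound
    intro n hn
    have hgood := hqgood (n-1)
    set qq := q (n-1) with hqqdef
    have hq1' : (1:ℝ) ≤ qq := hq1 (n-1)
    have hqq0 : (0:ℝ) < qq := hqpos (n-1)
    have hFq : 0 < F qq := hFpos (n-1)
    have hρ2 : (ρ n)^2 = K / F qq := by
      simp only [hρdef, hqqdef]
      exact Real.sq_sqrt (div_pos hK (hFpos (n-1))).le
    have harg : K / (ρ n)^2 = F qq := by
      rw [hρ2]
      field_simp
    have hinv : ψ'inv (K / (ρ n)^2) = qq := by
      rw [harg]
      exact hψ'inv' qq (by linarith)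
    have hne2 : ((d:ℝ) - 2) ≠ 0 := ne_of_gt hd20
    have he1 : (2:ℝ)/((d:ℝ)-2) = p - 1 := by
      rw [hpdef]; field_simp; ring
    have he2 : -(d:ℝ)/((d:ℝ)-2) = -p := by
      rw [hpdef]; ring
    simp only [Jfun]
    rw [hinv, hρ2, he1, he2, ← hFdef]
    have hint1 : IntervalIntegrable (fun v => F v * v ^ (-p)) volume 1 qq := by
      apply ContinuousOn.intervalIntegrable
      rw [Set.uIcc_of_le hq1']
      intro v hv
      exact ((hcont v hv.1).mul (Real.continuousAt_rpow_const v (-p)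
        (Or.inl (by linarith [hv.1])))).continuousWithinAt
    have hint2 : IntervalIntegrable (fun v => (F qq * qq ^ (-a)) * v ^ (a - p))
        volume 1 qq := by
      apply ContinuousOn.intervalIntegrable
      rw [Set.uIcc_of_le hq1']
      intro v hv
      exact (continuousAt_const.mul (Real.continuousAt_rpow_const v (a-p)
        (Or.inl (by linarith [hv.1])))).continuousWithinAt
    have hptle : ∀ v ∈ Set.Icc (1:ℝ) qq,
        F v * v ^ (-p) ≤ (F qq * qq ^ (-a)) * v ^ (a - p) := by
      intro v hv
      have hv0 : (0:ℝ) < v := lt_of_lt_of_le one_pos hv.1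
      have h1 : F v * v ^ (-a) ≤ F qq * qq ^ (-a) := hgood.2 v hv.1 hv.2
      have h2 : F v * v ^ (-a) * v ^ (a - p) ≤ (F qq * qq ^ (-a)) * v ^ (a-p) :=
        mul_le_mul_of_nonneg_right h1 (Real.rpow_pos_of_pos hv0 _).le
      calc F v * v ^ (-p) = F v * v ^ (-a) * v ^ (a - p) := by
            rw [mul_assoc, ← Real.rpow_add hv0]; ring_nf
      _ ≤ _ := h2
    have hmono_int := intervalIntegral.integral_mono_on hq1' hint1 hint2 hptle
    have hval : (∫ v in (1:ℝ)..qq, (F qq * qq ^ (-a)) * v ^ (a-p))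
        = (F qq * qq ^ (-a)) * ((qq ^ (a - p + 1) - 1) / (a - p + 1)) := by
      rw [intervalIntegral.integral_const_mul, integral_rpow]
      · simp [Real.one_rpow]
      · right
        refine ⟨ne_of_gt (by linarith : (-1:ℝ) < a - p), ?_⟩
        rw [Set.uIcc_of_le hq1']
        intro hc
        linarith [hc.1]
    have happ : (0:ℝ) < a - p + 1 := by linarith
    have hintle2 : (∫ v in (1:ℝ)..qq, F v * v ^ (-p))
        ≤ (F qq * qq ^ (-a)) * (qq ^ (a - p + 1) / (a - p + 1)) := by
      have h1 : (qq ^ (a-p+1) - 1)/(a-p+1) ≤ qq ^ (a-p+1)/(a-p+1) :=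
        (div_le_div_iff_of_pos_right happ).mpr (by linarith)
      have h2 : (0:ℝ) ≤ F qq * qq ^ (-a) :=
        (mul_pos hFq (Real.rpow_pos_of_pos hqq0 _)).le
      calc (∫ v in (1:ℝ)..qq, F v * v ^ (-p))
          ≤ (F qq * qq ^ (-a)) * ((qq ^ (a - p + 1) - 1) / (a - p + 1)) := by
            rw [← hval]; exact hmono_int
      _ ≤ _ := mul_le_mul_of_nonneg_left h1 h2
    have hone : qq ^ (p-1) * (qq ^ (-a) * qq ^ (a-p+1)) = 1 := by
      rw [← Real.rpow_add hqq0, ← Real.rpow_add hqq0,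
        show p - 1 + (-a + (a - p + 1)) = (0:ℝ) by ring, Real.rpow_zero]
    calc K / F qq * qq ^ (p-1) * (∫ v in (1:ℝ)..qq, F v * v ^ (-p))
        ≤ K / F qq * qq ^ (p-1) * ((F qq * qq ^ (-a)) * (qq ^ (a-p+1)/(a-p+1))) :=
          mul_le_mul_of_nonneg_left hintle2
            (mul_nonneg (div_pos hK hFq).le (Real.rpow_pos_of_pos hqq0 _).le)
    _ = (K / F qq * F qq) * (qq ^ (p-1) * (qq ^ (-a) * qq ^ (a-p+1))) / (a-p+1) := by
          ring
    _ = K / (a + 1 - p) := by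
          rw [hone, div_mul_cancel₀ _ (ne_of_gt hFq)]
          rw [mul_one]
          ring_nf
end
end

section
/- Let ψ be a branching mechanism of Lévy–Khintchine form with δ > 1, and set Φ(λ) = (ψ′(ψ^{−1}(λ)) − α)^{1/2} for λ ≥ 0. Let (Ω, 𝓕, P) be a probability space carrying a family (S_r)_{r ∈ [0,∞)} of nonnegative random variables such that E[exp(−λ·S_r)] = exp(−r·Φ(λ)) for all λ, r ∈ [0,∞). Let (ρ_n)_{n≥0} be a sequence with ρ_n ∈ (0, r₀/4) for all n, ρ_{n+1} ≤ e^{−n}·ρ_n for all n ≥ 0, and sup_{n≥1} n^{−2}·log(1/ρ_n) < ∞. Then: (i) Σ_{n≥0} P(S_{ρ_n} ≤ g(4ρ_n)) = ∞; and (ii) P-almost surely, limsup_{n→∞} S_{ρ_{n+1}}/g(4ρ_n) < ∞. -/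
open MeasureTheory Filter Set

noncomputable section

/-- `r₀ = min(α^{−1/2}, e^{−e})`, with the convention `α^{−1/2} = ∞` when `α = 0`. -/
def gaugeR0 (α : ℝ) : ℝ :=
  if α = 0 then Real.exp (-Real.exp 1)
  else min (α ^ (-(1 : ℝ) / 2)) (Real.exp (-Real.exp 1))

/-- The gauge function `g(r) = log log(1/r) / φ^{−1}(((1/r)·log log(1/r))²)`,
expressed through the inverse `φ^{−1}` of `φ = ψ′ ∘ ψ^{−1}`. -/
def gaugeFun (φinv : ℝ → ℝ) : ℝ → ℝ := fun r =>
  Real.log (Real.log (1 / r)) / φinv ((1 / r * Real.log (Real.log (1 / r))) ^ 2)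

section AuxLemmas

variable {Ω : Type*} [MeasurableSpace Ω] (P : Measure Ω) [IsProbabilityMeasure P]

lemma aux_integrable_exp (T : Ω → ℝ) (hT : Measurable T) (hT0 : ∀ ω, 0 ≤ T ω)
    {lam : ℝ} (hlam : 0 ≤ lam) :
    Integrable (fun ω => Real.exp (-(lam * T ω))) P := by
  refine Integrable.mono' (integrable_const 1)
    (((hT.const_mul lam).neg.exp).aestronglyMeasurable) ?_
  filter_upwards with ω
  rw [Real.norm_eq_abs, abs_of_pos (Real.exp_pos _)]
  exact Real.exp_le_one_iff.2 (neg_nonpos.2 (mul_nonneg hlam (hT0 ω)))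

lemma aux_lower (T : Ω → ℝ) (hT : Measurable T) (hT0 : ∀ ω, 0 ≤ T ω)
    {lam a c : ℝ} (hlam : 0 ≤ lam)
    (hLap : ∫ ω, Real.exp (-(lam * T ω)) ∂P = c) :
    c - Real.exp (-(lam * a)) ≤ (P {ω | T ω ≤ a}).toReal := by
  have hmeas : MeasurableSet {ω | T ω ≤ a} := measurableSet_le hT measurable_const
  have hind : Integrable (fun ω => Set.indicator {ω | T ω ≤ a} (fun _ => (1:ℝ)) ω) P :=
    (integrable_indicator_iff hmeas).2 (integrableOn_const (measure_ne_top P _))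
  have hptw : ∀ ω, Real.exp (-(lam * T ω))
      ≤ Set.indicator {ω | T ω ≤ a} (fun _ => (1:ℝ)) ω + Real.exp (-(lam * a)) := by
    intro ω
    by_cases hω : ω ∈ {ω | T ω ≤ a}
    · rw [Set.indicator_of_mem hω]
      have h1 : Real.exp (-(lam * T ω)) ≤ 1 :=
        Real.exp_le_one_iff.2 (neg_nonpos.2 (mul_nonneg hlam (hT0 ω)))
      linarith [Real.exp_pos (-(lam * a))]
    · rw [Set.indicator_of_notMem hω, zero_add]
      have h2 : a ≤ T ω := le_of_lt (not_le.1 hω)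
      exact Real.exp_le_exp.2 (neg_le_neg (mul_le_mul_of_nonneg_left h2 hlam))
  have hind2 : Integrable (fun ω => Set.indicator {ω | T ω ≤ a} (fun _ => (1:ℝ)) ω
      + Real.exp (-(lam * a))) P := hind.add (integrable_const _)
  have h := integral_mono (aux_integrable_exp P T hT hT0 hlam) hind2 hptw
  rw [hLap, integral_add hind (integrable_const _),
    integral_indicator_const (1:ℝ) hmeas, integral_const] at h
  simp only [measureReal_def, smul_eq_mul, mul_one, measure_univ, ENNReal.toReal_one, one_mul] at h
  linarith

lemma aux_upper (T : Ω → ℝ) (hT : Measurable T) (hT0 : ∀ ω, 0 ≤ T ω)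
    {lam a c : ℝ} (hlam : 0 ≤ lam)
    (hLap : ∫ ω, Real.exp (-(lam * T ω)) ∂P = c) :
    (1 - Real.exp (-(lam * a))) * (P {ω | a < T ω}).toReal ≤ 1 - c := by
  have hmeas : MeasurableSet {ω | a < T ω} := measurableSet_lt measurable_const hT
  have hind : Integrable (fun ω => Set.indicator {ω | a < T ω} (fun _ => (1:ℝ)) ω) P :=
    (integrable_indicator_iff hmeas).2 (integrableOn_const (measure_ne_top P _))
  have hint2 : Integrable (fun ω => 1 - Real.exp (-(lam * T ω))) P :=
    (integrable_const 1).sub (aux_integrable_exp P T hT hT0 hlam)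
  have hptw : ∀ ω, (1 - Real.exp (-(lam * a))) * Set.indicator {ω | a < T ω} (fun _ => (1:ℝ)) ω
      ≤ 1 - Real.exp (-(lam * T ω)) := by
    intro ω
    by_cases hω : ω ∈ {ω | a < T ω}
    · rw [Set.indicator_of_mem hω, mul_one]
      have h1 : lam * a ≤ lam * T ω := mul_le_mul_of_nonneg_left (le_of_lt hω) hlam
      have h2 := Real.exp_le_exp.2 (neg_le_neg h1)
      linarith
    · rw [Set.indicator_of_notMem hω, mul_zero]
      have h1 : Real.exp (-(lam * T ω)) ≤ 1 :=
        Real.exp_le_one_iff.2 (neg_nonpos.2 (mul_nonneg hlam (hT0 ω)))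
      linarith
  have hind2 : Integrable (fun ω => (1 - Real.exp (-(lam * a)))
      * Set.indicator {ω | a < T ω} (fun _ => (1:ℝ)) ω) P := hind.const_mul _
  have h := integral_mono hind2 hint2 hptw
  rw [integral_const_mul, integral_indicator_const (1:ℝ) hmeas,
    integral_sub (integrable_const 1) (aux_integrable_exp P T hT hT0 hlam),
    integral_const, hLap] at h
  simpa only [measureReal_def, smul_eq_mul, mul_one, measure_univ, ENNReal.toReal_one] using h

lemma aux_not_summable {f : ℕ → ℝ} {c : ℝ} (hc : 0 < c) (h0 : ∀ n, 0 ≤ f n)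
    (hf : ∀ n : ℕ, 1 ≤ n → c / n ≤ f n) : ¬ Summable f := by
  intro hs
  have h1 : Summable (fun n : ℕ => c / n) := by
    refine hs.of_nonneg_of_le (fun n => by positivity) ?_
    intro n
    cases n with
    | zero => simpa using h0 0
    | succ m => exact hf (m + 1) (Nat.succ_le_succ (Nat.zero_le m))
  have h2 := h1.mul_left c⁻¹
  have h3 : (fun n : ℕ => c⁻¹ * (c / n)) = fun n : ℕ => 1 / (n : ℝ) := by
    funext n
    field_simp
  rw [h3] at h2
  exact Real.not_summable_one_div_natCast h2

end AuxLemmas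

/-- if δ > 1, (S_r) is a subordinator-like family with Laplace
exponent Φ = (ψ′∘ψ^{−1} − α)^{1/2}, and (ρ_n) satisfies ρ_n ∈ (0, r₀/4),
ρ_{n+1} ≤ e^{−n}ρ_n and sup_{n≥1} n^{−2} log(1/ρ_n) < ∞, then
Σ_n P(S_{ρ_n} ≤ g(4ρ_n)) = ∞ and P-a.s. limsup_n S_{ρ_{n+1}}/g(4ρ_n) < ∞. -/
theorem statement14 (α β : ℝ) (π : Measure ℝ) (h : IsBranchingMechanism α β π)
    (hδ : 1 < deltaIndex (psiFun α β π))
    (ψinv φinv : ℝ → ℝ)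
    (hψinv : ∀ x : ℝ, 0 ≤ x → 0 ≤ ψinv x ∧ psiFun α β π (ψinv x) = x)
    (hψinv' : ∀ y : ℝ, 0 ≤ y → ψinv (psiFun α β π y) = y)
    (hφinv : ∀ x : ℝ, α ≤ x → 0 ≤ φinv x ∧ psiDeriv α β π (ψinv (φinv x)) = x)
    (hφinv' : ∀ y : ℝ, 0 ≤ y → φinv (psiDeriv α β π (ψinv y)) = y)
    {Ω : Type*} [MeasurableSpace Ω] (P : Measure Ω) [IsProbabilityMeasure P]
    (S : ℝ → Ω → ℝ)
    (hSmeas : ∀ r : ℝ, Measurable (S r))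
    (hSnonneg : ∀ (r : ℝ) (ω : Ω), 0 ≤ S r ω)
    (hLaplace : ∀ lam r : ℝ, 0 ≤ lam → 0 ≤ r →
      (∫ ω, Real.exp (-(lam * S r ω)) ∂P)
        = Real.exp (-(r * Real.sqrt (psiDeriv α β π (ψinv lam) - α))))
    (ρ : ℕ → ℝ)
    (hρmem : ∀ n : ℕ, ρ n ∈ Set.Ioo 0 (gaugeR0 α / 4))
    (hρdec : ∀ n : ℕ, ρ (n + 1) ≤ Real.exp (-(n : ℝ)) * ρ n)
    (hρlog : ∃ M : ℝ, ∀ n : ℕ, 1 ≤ n → ((n : ℝ))⁻¹ ^ 2 * Real.log (1 / ρ n) ≤ M) :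
    (∑' n : ℕ, P {ω | S (ρ n) ω ≤ gaugeFun φinv (4 * ρ n)} = ⊤) ∧
    (∀ᵐ ω ∂P, ∃ M : ℝ, ∀ n : ℕ,
      S (ρ (n + 1)) ω / gaugeFun φinv (4 * ρ n) ≤ M) := by
  classical
  obtain ⟨M, hM⟩ := hρlog
  have hρpos : ∀ n, 0 < ρ n := fun n => (hρmem n).1
  have hrpos : ∀ n, 0 < 4 * ρ n := fun n => by linarith [hρpos n]
  have hr0le : gaugeR0 α ≤ Real.exp (-Real.exp 1) := by
    unfold gaugeR0
    split_ifs with hα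
    · exact le_rfl
    · exact min_le_right _ _
  have hrlt : ∀ n, 4 * ρ n < Real.exp (-Real.exp 1) := fun n =>
    lt_of_lt_of_le (by linarith [(hρmem n).2]) hr0le
  have htgt : ∀ n, Real.exp 1 < Real.log (1 / (4 * ρ n)) := by
    intro n
    rw [Real.lt_log_iff_exp_lt (one_div_pos.2 (hrpos n)), lt_div_iff₀ (hrpos n)]
    have h1 : Real.exp (Real.exp 1) * (4 * ρ n)
        < Real.exp (Real.exp 1) * Real.exp (-Real.exp 1) :=
      mul_lt_mul_of_pos_left (hrlt n) (Real.exp_pos _)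
    rw [← Real.exp_add] at h1
    simpa using h1
  have htpos : ∀ n, 0 < Real.log (1 / (4 * ρ n)) := fun n =>
    lt_trans (Real.exp_pos 1) (htgt n)
  have hL1 : ∀ n, 1 < Real.log (Real.log (1 / (4 * ρ n))) := by
    intro n
    calc (1:ℝ) = Real.log (Real.exp 1) := (Real.log_exp 1).symm
    _ < Real.log (Real.log (1 / (4 * ρ n))) := Real.log_lt_log (Real.exp_pos 1) (htgt n)
  have hLpos : ∀ n, 0 < Real.log (Real.log (1 / (4 * ρ n))) := fun n =>
    lt_trans one_pos (hL1 n)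
  have hbase : ∀ n, 0 < 1 / (4 * ρ n) * Real.log (Real.log (1 / (4 * ρ n))) := fun n =>
    mul_pos (one_div_pos.2 (hrpos n)) (hLpos n)
  set X : ℕ → ℝ := fun n =>
    (1 / (4 * ρ n) * Real.log (Real.log (1 / (4 * ρ n)))) ^ 2 with hX
  have hXα : ∀ n, α < X n := by
    intro n
    simp only [hX]
    rcases eq_or_lt_of_le h.alpha_nonneg with hα | hα
    · rw [← hα]
      exact pow_pos (hbase n) 2
    · have hne : α ≠ 0 := ne_of_gt hα
      have hmle : gaugeR0 α ≤ α ^ (-(1:ℝ)/2) := by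
        unfold gaugeR0
        rw [if_neg hne]
        exact min_le_left _ _
      have h4 : 4 * ρ n < α ^ (-(1:ℝ)/2) := by
        have := (hρmem n).2
        linarith
      have hs : α ^ (-(1:ℝ)/2) = (Real.sqrt α)⁻¹ := by
        rw [neg_div, Real.rpow_neg h.alpha_nonneg, Real.sqrt_eq_rpow]
      rw [hs] at h4
      have hsqrtpos : 0 < Real.sqrt α := Real.sqrt_pos.2 hα
      have h5 : Real.sqrt α < 1 / (4 * ρ n) := by
        rw [lt_div_iff₀ (hrpos n)]
        have h6 := mul_lt_mul_of_pos_left h4 hsqrtpos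
        rwa [mul_inv_cancel₀ (ne_of_gt hsqrtpos)] at h6
      have h6 : Real.sqrt α < 1 / (4 * ρ n) * Real.log (Real.log (1 / (4 * ρ n))) := by
        calc Real.sqrt α < 1 / (4 * ρ n) := h5
        _ = 1 / (4 * ρ n) * 1 := (mul_one _).symm
        _ ≤ _ := mul_le_mul_of_nonneg_left (le_of_lt (hL1 n))
            (le_of_lt (one_div_pos.2 (hrpos n)))
      calc α = Real.sqrt α ^ 2 := (Real.sq_sqrt h.alpha_nonneg).symm
      _ < _ := pow_lt_pow_left₀ h6 (Real.sqrt_nonneg α) (by norm_num)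
  have hφX := fun n => hφinv (X n) (le_of_lt (hXα n))
  have hψinv0 : ψinv 0 = 0 := by
    have h0 : psiFun α β π 0 = 0 := by simp [psiFun]
    have h1 := hψinv' 0 le_rfl
    rwa [h0] at h1
  have hψD0 : psiDeriv α β π 0 = α := by simp [psiDeriv]
  have hlampos : ∀ n, 0 < φinv (X n) := by
    intro n
    rcases lt_or_eq_of_le (hφX n).1 with h1 | h1
    · exact h1
    · exfalso
      have h2 := (hφX n).2
      rw [← h1, hψinv0, hψD0] at h2
      exact (ne_of_lt (hXα n)) h2
  have hgauge : ∀ n, gaugeFun φinv (4 * ρ n)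
      = Real.log (Real.log (1 / (4 * ρ n))) / φinv (X n) := by
    intro n
    simp only [hX, gaugeFun]
  have hgpos : ∀ n, 0 < gaugeFun φinv (4 * ρ n) := by
    intro n
    rw [hgauge n]
    exact div_pos (hLpos n) (hlampos n)
  have hmul : ∀ n, φinv (X n) * gaugeFun φinv (4 * ρ n)
      = Real.log (Real.log (1 / (4 * ρ n))) := by
    intro n
    rw [hgauge n]
    rw [mul_div_assoc', mul_comm, mul_div_assoc, div_self (ne_of_gt (hlampos n)), mul_one]
  have hsqrt : ∀ n, Real.sqrt (X n - α)
      ≤ 1 / (4 * ρ n) * Real.log (Real.log (1 / (4 * ρ n))) := by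
    intro n
    have h1 : X n - α ≤ X n := by linarith [h.alpha_nonneg]
    have h2 : Real.sqrt (X n) = 1 / (4 * ρ n) * Real.log (Real.log (1 / (4 * ρ n))) := by
      simp only [hX]
      exact Real.sqrt_sq (le_of_lt (hbase n))
    calc Real.sqrt (X n - α) ≤ Real.sqrt (X n) := Real.sqrt_le_sqrt h1
    _ = _ := h2
  have hLap : ∀ (n : ℕ) (s : ℝ), 0 ≤ s →
      ∫ ω, Real.exp (-(φinv (X n) * S s ω)) ∂P
        = Real.exp (-(s * Real.sqrt (X n - α))) := by
    intro n s hs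
    have h1 := hLaplace (φinv (X n)) s (hφX n).1 hs
    rwa [(hφX n).2] at h1
  have hρlt1 : ∀ n, ρ n < 1 := by
    intro n
    have h1 := hrlt n
    have h2 : Real.exp (-Real.exp 1) ≤ 1 :=
      Real.exp_le_one_iff.2 (neg_nonpos.2 (Real.exp_pos 1).le)
    linarith [hρpos n]
  have hM0 : 0 < M := by
    have h1 := hM 1 le_rfl
    simp only [Nat.cast_one, inv_one, one_pow, one_mul] at h1
    have h2 : 0 < Real.log (1 / ρ 1) := by
      apply Real.log_pos
      rw [lt_div_iff₀ (hρpos 1)]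
      linarith [hρlt1 1]
    linarith
  have htle : ∀ n : ℕ, 1 ≤ n → Real.log (1 / (4 * ρ n)) ≤ M * (n:ℝ) ^ 2 := by
    intro n hn
    have hne : ((n:ℝ)) ≠ 0 := Nat.cast_ne_zero.2 (by omega)
    have h1 := hM n hn
    have h2 : Real.log (1 / ρ n) ≤ M * (n:ℝ) ^ 2 := by
      have h3 : Real.log (1 / ρ n) = (((n:ℝ))⁻¹ ^ 2 * Real.log (1 / ρ n)) * (n:ℝ) ^ 2 := by
        field_simp
      rw [h3]
      exact mul_le_mul_of_nonneg_right h1 (by positivity)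
    have h4 : Real.log (1 / (4 * ρ n)) ≤ Real.log (1 / ρ n) := by
      apply Real.log_le_log (one_div_pos.2 (hrpos n))
      apply one_div_le_one_div_of_le (hρpos n)
      linarith [hρpos n]
    linarith
  constructor
  · -- Part (i)
    by_contra hfin
    have hsum : Summable (fun n => (P {ω | S (ρ n) ω ≤ gaugeFun φinv (4 * ρ n)}).toReal) :=
      ENNReal.summable_toReal hfin
    set c : ℝ := 1 - Real.exp (-(3/4 : ℝ)) with hc
    have hcpos : 0 < c := by
      have h1 : Real.exp (-(3/4:ℝ)) < 1 := Real.exp_lt_one_iff.2 (by norm_num)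
      rw [hc]
      linarith
    have hMs : 0 < Real.sqrt M := Real.sqrt_pos.2 hM0
    have hbound1 : ∀ n, Real.exp (-(Real.log (Real.log (1 / (4 * ρ n))) / 4))
        - Real.exp (-Real.log (Real.log (1 / (4 * ρ n))))
        ≤ (P {ω | S (ρ n) ω ≤ gaugeFun φinv (4 * ρ n)}).toReal := by
      intro n
      have key := aux_lower P (S (ρ n)) (hSmeas (ρ n)) (hSnonneg (ρ n))
        (a := gaugeFun φinv (4 * ρ n)) (hφX n).1 (hLap n (ρ n) (hρpos n).le)
      rw [hmul n] at key
      refine le_trans ?_ key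
      have h1 : ρ n * Real.sqrt (X n - α) ≤ Real.log (Real.log (1 / (4 * ρ n))) / 4 := by
        have h2 : ρ n * Real.sqrt (X n - α)
            ≤ ρ n * (1 / (4 * ρ n) * Real.log (Real.log (1 / (4 * ρ n)))) :=
          mul_le_mul_of_nonneg_left (hsqrt n) (hρpos n).le
        have h3 : ρ n * (1 / (4 * ρ n) * Real.log (Real.log (1 / (4 * ρ n))))
            = Real.log (Real.log (1 / (4 * ρ n))) / 4 := by
          have hρne : ρ n ≠ 0 := ne_of_gt (hρpos n)
          field_simp
        linarith
      have h4 := Real.exp_le_exp.2 (neg_le_neg h1)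
      linarith
    have hlow : ∀ n : ℕ, 1 ≤ n → (c / Real.sqrt M) / n
        ≤ (P {ω | S (ρ n) ω ≤ gaugeFun φinv (4 * ρ n)}).toReal := by
      intro n hn
      refine le_trans ?_ (hbound1 n)
      have hn1 : (1:ℝ) ≤ (n:ℝ) := by exact_mod_cast hn
      have hnpos : (0:ℝ) < (n:ℝ) := by linarith
      set L := Real.log (Real.log (1 / (4 * ρ n))) with hLdef
      have e1 : Real.exp (-L) = Real.exp (-(L/4)) * Real.exp (-(3*L/4)) := by
        rw [← Real.exp_add]
        ring_nf
      have e2 : Real.exp (-(3*L/4)) ≤ Real.exp (-(3/4:ℝ)) :=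
        Real.exp_le_exp.2 (by nlinarith [hL1 n])
      have e3 : c * Real.exp (-(L/4)) ≤ Real.exp (-(L/4)) - Real.exp (-L) := by
        rw [e1, hc]
        nlinarith [Real.exp_pos (-(L/4)), e2]
      have hu0 : (0:ℝ) < M * (n:ℝ) ^ 2 := by positivity
      have hu1 : (1:ℝ) ≤ M * (n:ℝ) ^ 2 := by
        have := htle n hn
        have h5 : (1:ℝ) < Real.exp 1 := by linarith [Real.add_one_le_exp 1]
        linarith [htgt n]
      have e4 : (Real.sqrt M * n)⁻¹ ≤ Real.exp (-(L/4)) := by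
        have h5 : L ≤ Real.log (M * (n:ℝ) ^ 2) :=
          Real.log_le_log (htpos n) (htle n hn)
        have h6 : (M * (n:ℝ) ^ 2) ^ (-(1/4) : ℝ) ≤ Real.exp (-(L/4)) := by
          rw [Real.rpow_def_of_pos hu0]
          apply Real.exp_le_exp.2
          nlinarith [h5]
        refine le_trans ?_ h6
        rw [show (-(1/4) : ℝ) = -(1/4 : ℝ) by norm_num,
          Real.rpow_neg hu0.le]
        apply inv_anti₀
        · exact Real.rpow_pos_of_pos hu0 _
        · calc (M * (n:ℝ) ^ 2) ^ ((1:ℝ)/4)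
              ≤ (M * (n:ℝ) ^ 2) ^ ((1:ℝ)/2) :=
            Real.rpow_le_rpow_of_exponent_le hu1 (by norm_num)
          _ = Real.sqrt (M * (n:ℝ) ^ 2) := (Real.sqrt_eq_rpow _).symm
          _ = Real.sqrt M * n := by
            rw [Real.sqrt_mul hM0.le, Real.sqrt_sq (by positivity : (0:ℝ) ≤ (n:ℝ))]
      calc (c / Real.sqrt M) / n = c * (Real.sqrt M * n)⁻¹ := by
            rw [div_div, div_eq_mul_inv]
      _ ≤ c * Real.exp (-(L/4)) := mul_le_mul_of_nonneg_left e4 hcpos.le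
      _ ≤ _ := e3
    exact aux_not_summable (div_pos hcpos hMs) (fun n => ENNReal.toReal_nonneg) hlow hsum
  · -- Part (ii)
    set A : ℕ → Set Ω := fun n => {ω | gaugeFun φinv (4 * ρ n) < S (ρ (n + 1)) ω} with hA
    have hbound2 : ∀ n, (P (A n)).toReal
        ≤ Real.exp (-(n:ℝ)) * Real.log (Real.log (1 / (4 * ρ n))) / 2 := by
      intro n
      have key := aux_upper P (S (ρ (n+1))) (hSmeas _) (hSnonneg _)
        (a := gaugeFun φinv (4 * ρ n)) (hφX n).1 (hLap n (ρ (n+1)) (hρpos (n+1)).le)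
      rw [hmul n] at key
      set L := Real.log (Real.log (1 / (4 * ρ n))) with hLdef
      have h1 : 1 - Real.exp (-(ρ (n+1) * Real.sqrt (X n - α)))
          ≤ Real.exp (-(n:ℝ)) * L / 4 := by
        have h2 : ρ (n+1) * Real.sqrt (X n - α) ≤ Real.exp (-(n:ℝ)) * L / 4 := by
          have h3 : ρ (n+1) * Real.sqrt (X n - α)
              ≤ (Real.exp (-(n:ℝ)) * ρ n) * (1 / (4 * ρ n) * L) := by
            exact mul_le_mul (hρdec n) (hsqrt n) (Real.sqrt_nonneg _)
              (mul_nonneg (Real.exp_pos _).le (hρpos n).le)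
          have h4 : (Real.exp (-(n:ℝ)) * ρ n) * (1 / (4 * ρ n) * L)
              = Real.exp (-(n:ℝ)) * L / 4 := by
            have hρne : ρ n ≠ 0 := ne_of_gt (hρpos n)
            field_simp
          linarith
        linarith [Real.add_one_le_exp (-(ρ (n+1) * Real.sqrt (X n - α)))]
      have h5 : (1:ℝ)/2 ≤ 1 - Real.exp (-L) := by
        have h6 : Real.exp (-L) ≤ Real.exp (-(1:ℝ)) :=
          Real.exp_le_exp.2 (by linarith [hL1 n])
        have h7 : Real.exp (-(1:ℝ)) ≤ 1/2 := by
          rw [Real.exp_neg]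
          have h8 : (2:ℝ) ≤ Real.exp 1 := by linarith [Real.add_one_le_exp 1]
          have h9 := inv_anti₀ two_pos h8
          norm_num at h9 ⊢
          linarith
        linarith
      have hp0 : (0:ℝ) ≤ (P (A n)).toReal := ENNReal.toReal_nonneg
      have h10 := mul_le_mul_of_nonneg_right h5 hp0
      -- key : (1 - exp (-L)) * (P (A n)).toReal ≤ 1 - exp (-(ρ (n+1) * √(X n - α)))
      have hAn : {ω | gaugeFun φinv (4 * ρ n) < S (ρ (n + 1)) ω} = A n := by rw [hA]
      rw [hAn] at key
      linarith
    set M' : ℝ := max M (Real.log (1 / (4 * ρ 0))) with hM'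
    have hM'1 : 1 < M' := by
      have h1 : (1:ℝ) < Real.exp 1 := by linarith [Real.add_one_le_exp 1]
      have h2 := htgt 0
      calc (1:ℝ) < Real.log (1 / (4 * ρ 0)) := by linarith
      _ ≤ M' := le_max_right _ _
    have hlogM' : 0 ≤ Real.log M' := Real.log_nonneg hM'1.le
    have hLle : ∀ n : ℕ, Real.log (Real.log (1 / (4 * ρ n))) ≤ Real.log M' + 2 * n := by
      intro n
      rcases Nat.eq_zero_or_pos n with h0 | hp
      · subst h0
        have h1 : Real.log (Real.log (1 / (4 * ρ 0))) ≤ Real.log M' :=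
          Real.log_le_log (htpos 0) (le_max_right _ _)
        simpa using h1
      · have hn1 : (1:ℝ) ≤ (n:ℝ) := by exact_mod_cast hp
        have h1 : Real.log (1 / (4 * ρ n)) ≤ M' * (n:ℝ) ^ 2 :=
          le_trans (htle n hp)
            (mul_le_mul_of_nonneg_right (le_max_left _ _) (by positivity))
        have h2 : Real.log (Real.log (1 / (4 * ρ n))) ≤ Real.log (M' * (n:ℝ) ^ 2) :=
          Real.log_le_log (htpos n) h1
        have h3 : Real.log (M' * (n:ℝ) ^ 2) = Real.log M' + 2 * Real.log n := by
          rw [Real.log_mul (by linarith : M' ≠ 0) (by positivity : ((n:ℝ)) ^ 2 ≠ 0),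
            Real.log_pow]
          push_cast
          ring
        have h4 : Real.log (n:ℝ) ≤ (n:ℝ) := by
          have := Real.log_le_sub_one_of_pos (by linarith : (0:ℝ) < (n:ℝ))
          linarith
        linarith
    have hqe : ∀ n : ℕ, Real.exp (-(1:ℝ)) ^ n = Real.exp (-(n:ℝ)) := by
      intro n
      rw [← Real.exp_nat_mul]
      congr 1
      ring
    have hBsum : Summable (fun n : ℕ => Real.exp (-(n:ℝ)) * (Real.log M' + 2 * n) / 2) := by
      have hq : ‖Real.exp (-(1:ℝ))‖ < 1 := by
        rw [Real.norm_eq_abs, abs_of_pos (Real.exp_pos _)]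
        exact Real.exp_lt_one_iff.2 (by norm_num)
      have h1 : Summable (fun n : ℕ => (n:ℝ) ^ 1 * Real.exp (-(1:ℝ)) ^ n) :=
        summable_pow_mul_geometric_of_norm_lt_one 1 hq
      have h2 : Summable (fun n : ℕ => Real.exp (-(1:ℝ)) ^ n) :=
        summable_geometric_of_lt_one (Real.exp_pos _).le
          (Real.exp_lt_one_iff.2 (by norm_num))
      have h3 := (h2.mul_left (Real.log M' / 2)).add h1
      refine h3.congr ?_
      intro n
      simp only [Pi.add_apply, hqe n, pow_one]
      ring
    have hBnn : ∀ n : ℕ, 0 ≤ Real.exp (-(n:ℝ)) * (Real.log M' + 2 * n) / 2 := by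
      intro n
      apply div_nonneg _ (by norm_num)
      apply mul_nonneg (Real.exp_pos _).le
      positivity
    have htsum_ne : ∑' n, P (A n) ≠ ⊤ := by
      have hle : ∀ n, P (A n)
          ≤ ENNReal.ofReal (Real.exp (-(n:ℝ)) * (Real.log M' + 2 * n) / 2) := by
        intro n
        have h1 : (P (A n)).toReal ≤ Real.exp (-(n:ℝ)) * (Real.log M' + 2 * n) / 2 := by
          refine le_trans (hbound2 n) ?_
          have h2 := mul_le_mul_of_nonneg_left (hLle n) (Real.exp_pos (-(n:ℝ))).le
          linarith
        calc P (A n) = ENNReal.ofReal ((P (A n)).toReal) :=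
              (ENNReal.ofReal_toReal (measure_ne_top P _)).symm
        _ ≤ _ := ENNReal.ofReal_le_ofReal h1
      refine ne_top_of_le_ne_top ?_ (ENNReal.tsum_le_tsum hle)
      rw [← ENNReal.ofReal_tsum_of_nonneg hBnn hBsum]
      exact ENNReal.ofReal_ne_top
    have hae := MeasureTheory.ae_eventually_notMem htsum_ne
    filter_upwards [hae] with ω hω
    obtain ⟨N, hN⟩ := eventually_atTop.1 hω
    refine ⟨1 + ∑ k ∈ Finset.range N, S (ρ (k + 1)) ω / gaugeFun φinv (4 * ρ k),
      fun n => ?_⟩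
    have hterm : ∀ k : ℕ, 0 ≤ S (ρ (k + 1)) ω / gaugeFun φinv (4 * ρ k) :=
      fun k => div_nonneg (hSnonneg _ _) (hgpos k).le
    have hsum0 : 0 ≤ ∑ k ∈ Finset.range N, S (ρ (k + 1)) ω / gaugeFun φinv (4 * ρ k) :=
      Finset.sum_nonneg fun k _ => hterm k
    by_cases hn : N ≤ n
    · have h2 : ¬ (gaugeFun φinv (4 * ρ n) < S (ρ (n + 1)) ω) := by
        simpa [hA] using hN n hn
      have h3 : S (ρ (n + 1)) ω / gaugeFun φinv (4 * ρ n) ≤ 1 :=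
        (div_le_one (hgpos n)).2 (not_lt.1 h2)
      linarith
    · push_neg at hn
      have h4 := Finset.single_le_sum
        (f := fun k => S (ρ (k + 1)) ω / gaugeFun φinv (4 * ρ k))
        (fun k _ => hterm k) (Finset.mem_range.2 hn)
      linarith
end
end

section
/- Let ψ be a branching mechanism of Lévy–Khintchine form with δ > 1, and set Φ₂(λ) = (2·(ψ′(ψ^{−1}(λ)) − α))^{1/2} for λ ≥ 0. Let (Ω, 𝓕, P) be a probability space carrying a family (S_r)_{r ∈ [0,∞)} of nonnegative random variables such that E[exp(−λ·S_r)] = exp(−r·Φ₂(λ)) for all λ, r ∈ [0,∞). Let (ρ_n)_{n≥1} be a sequence with ρ_n ∈ (0, r₀/8) for all n, ρ_{n+1} ≤ e^{−n}·ρ_n for all n ≥ 1, and sup_{n≥1} n^{−2}·log(1/ρ_n) < ∞. Then: (i) Σ_{n≥1} P(S_{2ρ_n} ≤ g(8ρ_n)) = ∞; and (ii) P-almost surely, limsup_{n→∞} S_{2ρ_{n+1}}/g(8ρ_n) < ∞. -/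
open MeasureTheory Filter Set

noncomputable section

lemma st15_int {Ω : Type*} [MeasurableSpace Ω] (P : Measure Ω) [IsProbabilityMeasure P]
    (f : Ω → ℝ) (hf : Measurable f) (hf0 : ∀ ω, 0 ≤ f ω) {lam : ℝ} (hlam : 0 ≤ lam) :
    Integrable (fun ω => Real.exp (-(lam * f ω))) P := by
  refine Integrable.mono' (integrable_const 1) ?_ ?_
  · exact (Real.measurable_exp.comp ((hf.const_mul lam).neg)).aestronglyMeasurable
  · filter_upwards with ω
    rw [Real.norm_eq_abs, abs_of_pos (Real.exp_pos _)]
    rw [show (1:ℝ) = Real.exp 0 by simp]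
    apply Real.exp_le_exp.mpr
    have := hf0 ω
    nlinarith

lemma st15_lower {Ω : Type*} [MeasurableSpace Ω] (P : Measure Ω) [IsProbabilityMeasure P]
    (f : Ω → ℝ) (hf : Measurable f) (hf0 : ∀ ω, 0 ≤ f ω) {lam : ℝ} (x : ℝ) (hlam : 0 ≤ lam) :
    (∫ ω, Real.exp (-(lam * f ω)) ∂P) ≤ (P {ω | f ω ≤ x}).toReal + Real.exp (-(lam * x)) := by
  have hA : MeasurableSet {ω | f ω ≤ x} := measurableSet_le hf measurable_const
  have hyp : ∀ ω, Real.exp (-(lam * f ω)) ≤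
      ({ω | f ω ≤ x}).indicator (fun _ => (1:ℝ)) ω + Real.exp (-(lam * x)) := by
    intro ω
    by_cases hω : f ω ≤ x
    · rw [Set.indicator_of_mem (show ω ∈ {ω | f ω ≤ x} from hω)]
      have h1 : Real.exp (-(lam * f ω)) ≤ 1 := by
        rw [show (1:ℝ) = Real.exp 0 by simp]
        apply Real.exp_le_exp.mpr
        have := hf0 ω; nlinarith
      have := (Real.exp_pos (-(lam * x))).le
      linarith
    · rw [Set.indicator_of_notMem (show ω ∉ {ω | f ω ≤ x} from hω)]
      push_neg at hω
      have : lam * x ≤ lam * f ω := mul_le_mul_of_nonneg_left hω.le hlam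
      simpa using Real.exp_le_exp.mpr (by linarith)
  calc (∫ ω, Real.exp (-(lam * f ω)) ∂P)
      ≤ ∫ ω, (({ω | f ω ≤ x}).indicator (fun _ => (1:ℝ)) ω + Real.exp (-(lam * x))) ∂P := by
        refine integral_mono (st15_int P f hf hf0 hlam) ?_ hyp
        exact ((integrable_const 1).indicator hA).add (integrable_const _)
    _ = (P {ω | f ω ≤ x}).toReal + Real.exp (-(lam * x)) := by
        rw [integral_add ((integrable_const 1).indicator hA) (integrable_const _),
          integral_indicator_const (1:ℝ) hA, integral_const]
        simp
        rfl

lemma st15_upper {Ω : Type*} [MeasurableSpace Ω] (P : Measure Ω) [IsProbabilityMeasure P]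
    (f : Ω → ℝ) (hf : Measurable f) (hf0 : ∀ ω, 0 ≤ f ω) {lam : ℝ} (x : ℝ) (hlam : 0 ≤ lam) :
    (1 - Real.exp (-(lam * x))) * (P {ω | x < f ω}).toReal
      ≤ 1 - ∫ ω, Real.exp (-(lam * f ω)) ∂P := by
  have hA : MeasurableSet {ω | x < f ω} := measurableSet_lt measurable_const hf
  have hyp : ∀ ω, ({ω | x < f ω}).indicator (fun _ => (1 - Real.exp (-(lam * x)))) ω
      ≤ 1 - Real.exp (-(lam * f ω)) := by
    intro ω
    by_cases hω : x < f ω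
    · rw [Set.indicator_of_mem (show ω ∈ {ω | x < f ω} from hω)]
      have : lam * x ≤ lam * f ω := mul_le_mul_of_nonneg_left hω.le hlam
      have := Real.exp_le_exp.mpr (neg_le_neg this)
      linarith
    · rw [Set.indicator_of_notMem (show ω ∉ {ω | x < f ω} from hω)]
      have h1 : Real.exp (-(lam * f ω)) ≤ 1 := by
        rw [show (1:ℝ) = Real.exp 0 by simp]
        apply Real.exp_le_exp.mpr
        have := hf0 ω; nlinarith
      linarith
  calc (1 - Real.exp (-(lam * x))) * (P {ω | x < f ω}).toReal
      = ∫ ω, ({ω | x < f ω}).indicator (fun _ => (1 - Real.exp (-(lam * x)))) ω ∂P := by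
        rw [integral_indicator_const _ hA]; rw [smul_eq_mul]; rw [measureReal_def]; ring
    _ ≤ ∫ ω, (1 - Real.exp (-(lam * f ω))) ∂P := by
        refine integral_mono ((integrable_const _).indicator hA)
          ((integrable_const 1).sub (st15_int P f hf hf0 hlam)) hyp
    _ = 1 - ∫ ω, Real.exp (-(lam * f ω)) ∂P := by
        rw [integral_sub (integrable_const 1) (st15_int P f hf hf0 hlam), integral_const]
        simp

lemma st15_gauge (α ρ : ℝ) (hα : 0 ≤ α) (h1 : 0 < ρ) (h2 : ρ < gaugeR0 α / 8) :
    Real.exp 1 ≤ Real.log (1 / (8 * ρ)) ∧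
      α < (1 / (8 * ρ) * Real.log (Real.log (1 / (8 * ρ)))) ^ 2 := by
  have hr0 : gaugeR0 α ≤ Real.exp (-Real.exp 1) := by
    unfold gaugeR0; split
    · exact le_rfl
    · exact min_le_right _ _
  have h8 : 8 * ρ < Real.exp (-Real.exp 1) := by linarith
  have hinv : Real.exp (Real.exp 1) < 1 / (8 * ρ) := by
    rw [Real.exp_neg] at h8
    rw [one_div]
    rw [show Real.exp (Real.exp 1) = ((Real.exp (Real.exp 1))⁻¹)⁻¹ by simp]
    exact inv_strictAnti₀ (by linarith) h8
  have ht : Real.exp 1 ≤ Real.log (1 / (8 * ρ)) := by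
    have := Real.log_le_log (Real.exp_pos _) hinv.le
    rwa [Real.log_exp] at this
  refine ⟨ht, ?_⟩
  have htpos : 0 < Real.log (1 / (8 * ρ)) := lt_of_lt_of_le (Real.exp_pos 1) ht
  have hL1 : 1 ≤ Real.log (Real.log (1 / (8 * ρ))) := by
    have := Real.log_le_log (Real.exp_pos 1) ht
    rwa [Real.log_exp] at this
  have hKpos : 0 < 1 / (8 * ρ) := by positivity
  rcases eq_or_lt_of_le hα with hα0 | hαpos
  · have : 0 < 1 / (8 * ρ) * Real.log (Real.log (1 / (8 * ρ))) := by nlinarith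
    nlinarith
  · have hr0' : gaugeR0 α ≤ (Real.sqrt α)⁻¹ := by
      unfold gaugeR0
      rw [if_neg (by positivity)]
      refine le_trans (min_le_left _ _) ?_
      rw [Real.sqrt_eq_rpow, ← Real.rpow_neg hα]
      norm_num
    have hsq : Real.sqrt α < 1 / (8 * ρ) := by
      have h8' : 8 * ρ < (Real.sqrt α)⁻¹ := by linarith
      rw [one_div]
      rw [show Real.sqrt α = ((Real.sqrt α)⁻¹)⁻¹ by simp]
      exact inv_strictAnti₀ (by linarith) h8'
    have hs : Real.sqrt α ^ 2 = α := Real.sq_sqrt hα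
    have h0 : 0 ≤ Real.sqrt α := Real.sqrt_nonneg α
    have hK2 : α < (1 / (8 * ρ)) ^ 2 := by nlinarith
    have hL2 : (1 / (8 * ρ)) ^ 2 ≤ (1 / (8 * ρ) * Real.log (Real.log (1 / (8 * ρ)))) ^ 2 := by
      have hh : 0 ≤ (Real.log (Real.log (1 / (8 * ρ))) - 1) * (Real.log (Real.log (1 / (8 * ρ))) + 1) :=
        mul_nonneg (by linarith) (by linarith)
      nlinarith [mul_pos hKpos hKpos]
    linarith

lemma st15_core (α β : ℝ) (π : Measure ℝ) (hα : 0 ≤ α) (ψinv φinv : ℝ → ℝ)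
    (hψinv0 : ψinv 0 = 0)
    (hφinv : ∀ x : ℝ, α ≤ x → 0 ≤ φinv x ∧ psiDeriv α β π (ψinv (φinv x)) = x)
    (hd0 : psiDeriv α β π 0 = α)
    (ρ : ℝ) (h1 : 0 < ρ) (h2 : ρ < gaugeR0 α / 8) :
    ∃ lam L : ℝ, 0 < lam ∧ 1 ≤ L ∧
      gaugeFun φinv (8 * ρ) = L / lam ∧
      psiDeriv α β π (ψinv lam) = (1 / (8 * ρ) * L) ^ 2 ∧
      Real.sqrt (2 * (psiDeriv α β π (ψinv lam) - α)) ≤ 2 * (1 / (8 * ρ) * L) ∧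
      Real.exp (-L) = (Real.log (1 / (8 * ρ)))⁻¹ ∧
      Real.exp 1 ≤ Real.log (1 / (8 * ρ)) ∧
      L = Real.log (Real.log (1 / (8 * ρ))) := by
  obtain ⟨ht, hK⟩ := st15_gauge α ρ hα h1 h2
  have htpos : 0 < Real.log (1 / (8 * ρ)) := lt_of_lt_of_le (Real.exp_pos 1) ht
  have hL1 : 1 ≤ Real.log (Real.log (1 / (8 * ρ))) := by
    have := Real.log_le_log (Real.exp_pos 1) ht
    rwa [Real.log_exp] at this
  have hKpos : 0 < 1 / (8 * ρ) * Real.log (Real.log (1 / (8 * ρ))) := by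
    have : (0:ℝ) < 1 / (8 * ρ) := by positivity
    nlinarith
  obtain ⟨hφ0, hφeq⟩ := hφinv _ hK.le
  have hlampos : 0 < φinv ((1 / (8 * ρ) * Real.log (Real.log (1 / (8 * ρ)))) ^ 2) := by
    rcases lt_or_eq_of_le hφ0 with hh | hh
    · exact hh
    · exfalso
      rw [← hh, hψinv0, hd0] at hφeq
      exact (ne_of_lt hK) hφeq
  refine ⟨_, _, hlampos, hL1, rfl, hφeq, ?_, ?_, ht, rfl⟩
  · rw [hφeq]
    calc Real.sqrt (2 * ((1 / (8 * ρ) * Real.log (Real.log (1 / (8 * ρ)))) ^ 2 - α))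
        ≤ Real.sqrt ((2 * (1 / (8 * ρ) * Real.log (Real.log (1 / (8 * ρ))))) ^ 2) :=
          Real.sqrt_le_sqrt (by nlinarith)
      _ = 2 * (1 / (8 * ρ) * Real.log (Real.log (1 / (8 * ρ)))) :=
          Real.sqrt_sq (by linarith)
  · rw [Real.exp_neg, Real.exp_log htpos]


set_option maxHeartbeats 1000000

/-- if δ > 1, (S_r) has Laplace exponent
Φ₂ = (2(ψ′∘ψ^{−1} − α))^{1/2}, and (ρ_n)_{n≥1} satisfies ρ_n ∈ (0, r₀/8),
ρ_{n+1} ≤ e^{−n}ρ_n and sup_{n≥1} n^{−2} log(1/ρ_n) < ∞, then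
Σ_{n≥1} P(S_{2ρ_n} ≤ g(8ρ_n)) = ∞ and P-a.s.
limsup_n S_{2ρ_{n+1}}/g(8ρ_n) < ∞. -/
theorem statement15 (α β : ℝ) (π : Measure ℝ) (h : IsBranchingMechanism α β π)
    (hδ : 1 < deltaIndex (psiFun α β π))
    (ψinv φinv : ℝ → ℝ)
    (hψinv : ∀ x : ℝ, 0 ≤ x → 0 ≤ ψinv x ∧ psiFun α β π (ψinv x) = x)
    (hψinv' : ∀ y : ℝ, 0 ≤ y → ψinv (psiFun α β π y) = y)
    (hφinv : ∀ x : ℝ, α ≤ x → 0 ≤ φinv x ∧ psiDeriv α β π (ψinv (φinv x)) = x)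
    (hφinv' : ∀ y : ℝ, 0 ≤ y → φinv (psiDeriv α β π (ψinv y)) = y)
    {Ω : Type*} [MeasurableSpace Ω] (P : Measure Ω) [IsProbabilityMeasure P]
    (S : ℝ → Ω → ℝ)
    (hSmeas : ∀ r : ℝ, Measurable (S r))
    (hSnonneg : ∀ (r : ℝ) (ω : Ω), 0 ≤ S r ω)
    (hLaplace : ∀ lam r : ℝ, 0 ≤ lam → 0 ≤ r →
      (∫ ω, Real.exp (-(lam * S r ω)) ∂P)
        = Real.exp (-(r * Real.sqrt (2 * (psiDeriv α β π (ψinv lam) - α)))))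
    (ρ : ℕ → ℝ)
    (hρmem : ∀ n : ℕ, 1 ≤ n → ρ n ∈ Set.Ioo 0 (gaugeR0 α / 8))
    (hρdec : ∀ n : ℕ, 1 ≤ n → ρ (n + 1) ≤ Real.exp (-(n : ℝ)) * ρ n)
    (hρlog : ∃ M : ℝ, ∀ n : ℕ, 1 ≤ n → ((n : ℝ))⁻¹ ^ 2 * Real.log (1 / ρ n) ≤ M) :
    (∑' n : ℕ, P {ω | S (2 * ρ (n + 1)) ω ≤ gaugeFun φinv (8 * ρ (n + 1))} = ⊤) ∧
    (∀ᵐ ω ∂P, ∃ M : ℝ, ∀ n : ℕ, 1 ≤ n →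
      S (2 * ρ (n + 1)) ω / gaugeFun φinv (8 * ρ n) ≤ M) := by
  classical
  have hα : 0 ≤ α := h.alpha_nonneg
  obtain ⟨M, hM⟩ := hρlog
  have hψ0 : psiFun α β π 0 = 0 := by simp [psiFun]
  have hd0' : psiDeriv α β π 0 = α := by simp [psiDeriv]
  have hψinv0 : ψinv 0 = 0 := by have := hψinv' 0 le_rfl; rwa [hψ0] at this
  set M₀ : ℝ := max M 1 with hM₀def
  have hM₀pos : (0:ℝ) < M₀ := lt_of_lt_of_le one_pos (le_max_right _ _)
  have hρpos : ∀ m : ℕ, 1 ≤ m → 0 < ρ m := fun m hm => (hρmem m hm).1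
  have hlogρ : ∀ m : ℕ, 1 ≤ m → Real.log (1 / (8 * ρ m)) ≤ M₀ * (m:ℝ)^2 := by
    intro m hm
    have hmpos : (0:ℝ) < (m:ℝ) := by exact_mod_cast hm
    have hρm := hρpos m hm
    have h1 : Real.log (1 / (8 * ρ m)) ≤ Real.log (1 / ρ m) := by
      apply Real.log_le_log (by positivity)
      rw [div_le_div_iff₀ (by positivity) hρm]
      nlinarith
    have h2 := hM m hm
    have h3 : Real.log (1 / ρ m) ≤ M * (m:ℝ)^2 := by
      have h4 := mul_le_mul_of_nonneg_left h2 (le_of_lt (pow_pos hmpos 2))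
      calc Real.log (1 / ρ m)
          = (m:ℝ)^2 * (((m:ℝ))⁻¹^2 * Real.log (1 / ρ m)) := by field_simp
        _ ≤ (m:ℝ)^2 * M := h4
        _ = M * (m:ℝ)^2 := by ring
    have h5 : M ≤ M₀ := le_max_left _ _
    nlinarith [pow_pos hmpos 2]
  have core := fun (m : ℕ) (hm : 1 ≤ m) =>
    st15_core α β π hα ψinv φinv hψinv0 hφinv hd0' (ρ m) (hρpos m hm) (hρmem m hm).2
  choose lam L hlampos hL1 hgauge hpsilam hsqrt hexpL hte hLdef using core
  have hgpos : ∀ (m : ℕ) (hm : 1 ≤ m), 0 < gaugeFun φinv (8 * ρ m) := by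
    intro m hm
    rw [hgauge m hm]
    exact div_pos (by linarith [hL1 m hm]) (hlampos m hm)
  constructor
  · -- Part (i)
    set d : ℝ := (Real.sqrt M₀)⁻¹ with hd
    have hdpos : 0 < d := inv_pos.2 (Real.sqrt_pos.2 hM₀pos)
    have hd2 : d^2 = M₀⁻¹ := by
      rw [hd]
      rw [← Real.sq_sqrt hM₀pos.le]
      field_simp
      simp [Real.sq_sqrt hM₀pos.le]
    have hterm : ∀ n : ℕ, ENNReal.ofReal (d/3 * ((n:ℝ)+1)⁻¹)
        ≤ P {ω | S (2 * ρ (n + 1)) ω ≤ gaugeFun φinv (8 * ρ (n + 1))} := by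
      intro n
      have hm : 1 ≤ n + 1 := Nat.le_add_left 1 n
      set m := n + 1 with hmdef
      have hlam0 : (0:ℝ) ≤ lam m hm := (hlampos m hm).le
      have hρm := hρpos m hm
      have hLm := hL1 m hm
      have hE := hLaplace (lam m hm) (2 * ρ m) hlam0 (by positivity)
      have hlow := st15_lower P (S (2 * ρ m)) (hSmeas _) (hSnonneg _)
        (gaugeFun φinv (8 * ρ m)) hlam0
      rw [hE] at hlow
      have hlg : lam m hm * gaugeFun φinv (8 * ρ m) = L m hm := by
        rw [hgauge m hm]
        field_simp [(hlampos m hm).ne']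
      have hexp1 : 2 * ρ m * Real.sqrt (2 * (psiDeriv α β π (ψinv (lam m hm)) - α))
          ≤ L m hm / 2 := by
        have h1 := hsqrt m hm
        have h2 : 2 * ρ m * (2 * (1 / (8 * ρ m) * L m hm)) = L m hm / 2 := by
          field_simp
          ring
        nlinarith [Real.sqrt_nonneg (2 * (psiDeriv α β π (ψinv (lam m hm)) - α))]
      set E := Real.exp (-(L m hm / 2)) with hEdef
      have hEpos : 0 < E := Real.exp_pos _
      have hstep1 : E ≤ Real.exp (-(2 * ρ m *
          Real.sqrt (2 * (psiDeriv α β π (ψinv (lam m hm)) - α)))) :=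
        Real.exp_le_exp.mpr (by linarith)
      have hstep2 : Real.exp (-(lam m hm * gaugeFun φinv (8 * ρ m))) = E * E := by
        rw [hlg, hEdef, ← Real.exp_add]
        ring_nf
      have hE23 : E ≤ 2/3 := by
        have h1 : E ≤ Real.exp (-(1/2)) := Real.exp_le_exp.mpr (by linarith)
        rw [Real.exp_neg] at h1
        have h2 : (3:ℝ)/2 ≤ Real.exp (1/2) := by nlinarith [Real.add_one_le_exp (1/2:ℝ)]
        have h3 : (0:ℝ) < Real.exp (1/2) := Real.exp_pos _
        have h4 : Real.exp (1/2:ℝ) * (Real.exp (1/2:ℝ))⁻¹ = 1 := mul_inv_cancel₀ (ne_of_gt h3)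
        have h5 : (0:ℝ) ≤ (Real.exp (1/2:ℝ))⁻¹ := inv_nonneg.2 h3.le
        nlinarith
      have hptoReal : E/3 ≤ (P {ω | S (2 * ρ m) ω ≤ gaugeFun φinv (8 * ρ m)}).toReal := by
        nlinarith [hlow, hstep1, hstep2]
      have htm := hte m hm
      have htpos : (0:ℝ) < Real.log (1 / (8 * ρ m)) := lt_of_lt_of_le (Real.exp_pos 1) htm
      have hE2 : E * E = (Real.log (1 / (8 * ρ m)))⁻¹ := by
        rw [hEdef, ← Real.exp_add, show -(L m hm/2) + -(L m hm/2) = -(L m hm) by ring,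
          hexpL m hm]
      have htup := hlogρ m hm
      have hmpos : (0:ℝ) < (m:ℝ) := by exact_mod_cast hm
      have hE2ge : d^2 * ((m:ℝ)⁻¹)^2 ≤ E * E := by
        rw [hE2, hd2]
        rw [show M₀⁻¹ * ((m:ℝ)⁻¹)^2 = (M₀ * (m:ℝ)^2)⁻¹ by field_simp]
        exact inv_anti₀ htpos htup
      have hEd : d * (m:ℝ)⁻¹ ≤ E := by
        nlinarith [mul_pos hdpos (inv_pos.2 hmpos), hEpos]
      have hc : ((n:ℝ)+1) = (m:ℝ) := by rw [hmdef]; push_cast; ring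
      have hfinal : d/3 * ((n:ℝ)+1)⁻¹
          ≤ (P {ω | S (2 * ρ m) ω ≤ gaugeFun φinv (8 * ρ m)}).toReal := by
        rw [hc]
        nlinarith
      calc ENNReal.ofReal (d/3 * ((n:ℝ)+1)⁻¹)
          ≤ ENNReal.ofReal ((P {ω | S (2 * ρ m) ω ≤ gaugeFun φinv (8 * ρ m)}).toReal) :=
            ENNReal.ofReal_le_ofReal hfinal
        _ = P {ω | S (2 * ρ m) ω ≤ gaugeFun φinv (8 * ρ m)} :=
            ENNReal.ofReal_toReal (measure_ne_top P _)
    have htop : (∑' n : ℕ, ENNReal.ofReal (d/3 * ((n:ℝ)+1)⁻¹)) = ⊤ := by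
      by_contra hne
      have hs := ENNReal.summable_toReal hne
      have heq : (fun n : ℕ => (ENNReal.ofReal (d/3 * ((n:ℝ)+1)⁻¹)).toReal)
          = fun n : ℕ => d/3 * ((n:ℝ)+1)⁻¹ := by
        funext n
        exact ENNReal.toReal_ofReal (by positivity)
      rw [heq] at hs
      have hs2 : Summable (fun n : ℕ => ((n:ℝ)+1)⁻¹) := by
        have h6 := hs.mul_left (3/d)
        refine h6.congr fun n => ?_
        field_simp
      have hs3 : Summable (fun n : ℕ => ((n:ℕ):ℝ)⁻¹) := by
        refine (summable_nat_add_iff 1).1 ?_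
        refine hs2.congr fun n => ?_
        push_cast
        ring
      exact Real.not_summable_natCast_inv hs3
    exact top_le_iff.mp (htop ▸ ENNReal.tsum_le_tsum hterm)
  · -- Part (ii)
    have hbound : ∀ n : ℕ, P {ω | gaugeFun φinv (8 * ρ (n+1)) < S (2 * ρ (n+1+1)) ω}
        ≤ ENNReal.ofReal (M₀ * ((n:ℝ)+1)^2 * Real.exp (-((n:ℝ)+1))) := by
      intro n
      have hm : 1 ≤ n + 1 := Nat.le_add_left 1 n
      set m := n + 1 with hmdef
      have hlam0 : (0:ℝ) ≤ lam m hm := (hlampos m hm).le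
      have hρm := hρpos m hm
      have hρm1 := hρpos (m+1) (by omega)
      have hLm := hL1 m hm
      have hE := hLaplace (lam m hm) (2 * ρ (m+1)) hlam0 (by positivity)
      have hup := st15_upper P (S (2 * ρ (m+1))) (hSmeas _) (hSnonneg _)
        (gaugeFun φinv (8 * ρ m)) hlam0
      rw [hE] at hup
      have hp0 : (0:ℝ) ≤ (P {ω | gaugeFun φinv (8 * ρ m) < S (2 * ρ (m+1)) ω}).toReal :=
        ENNReal.toReal_nonneg
      have hlg : lam m hm * gaugeFun φinv (8 * ρ m) = L m hm := by
        rw [hgauge m hm]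
        field_simp [(hlampos m hm).ne']
      have hhalf : (1:ℝ)/2 ≤ 1 - Real.exp (-(lam m hm * gaugeFun φinv (8 * ρ m))) := by
        rw [hlg]
        have h1 : Real.exp (-(L m hm)) ≤ Real.exp (-1) := Real.exp_le_exp.mpr (by linarith)
        have h2 : Real.exp (-(1:ℝ)) ≤ 1/2 := by
          rw [Real.exp_neg]
          have h3 : (2:ℝ) ≤ Real.exp 1 := by nlinarith [Real.add_one_le_exp (1:ℝ)]
          have h4 : Real.exp (1:ℝ) * (Real.exp (1:ℝ))⁻¹ = 1 :=
            mul_inv_cancel₀ (ne_of_gt (Real.exp_pos 1))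
          have h5 : (0:ℝ) ≤ (Real.exp (1:ℝ))⁻¹ := inv_nonneg.2 (Real.exp_pos 1).le
          nlinarith
        linarith
      have hsq := hsqrt m hm
      have hΦnn : 0 ≤ Real.sqrt (2 * (psiDeriv α β π (ψinv (lam m hm)) - α)) :=
        Real.sqrt_nonneg _
      have hdec := hρdec m hm
      have hrΦ : 2 * ρ (m+1) * Real.sqrt (2 * (psiDeriv α β π (ψinv (lam m hm)) - α))
          ≤ Real.exp (-(m:ℝ)) * L m hm / 2 := by
        have h2 : 2 * (Real.exp (-(m:ℝ)) * ρ m) * (2 * (1 / (8 * ρ m) * L m hm))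
            = Real.exp (-(m:ℝ)) * L m hm / 2 := by
          field_simp
          ring
        have hexpm := (Real.exp_pos (-(m:ℝ))).le
        nlinarith [mul_nonneg hexpm hρm.le]
      have hone : 1 - Real.exp (-(2 * ρ (m+1) *
            Real.sqrt (2 * (psiDeriv α β π (ψinv (lam m hm)) - α))))
          ≤ 2 * ρ (m+1) * Real.sqrt (2 * (psiDeriv α β π (ψinv (lam m hm)) - α)) := by
        nlinarith [Real.add_one_le_exp (-(2 * ρ (m+1) *
          Real.sqrt (2 * (psiDeriv α β π (ψinv (lam m hm)) - α))))]
      have hpbound : (P {ω | gaugeFun φinv (8 * ρ m) < S (2 * ρ (m+1)) ω}).toReal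
          ≤ Real.exp (-(m:ℝ)) * L m hm := by
        nlinarith [hup, hhalf, hrΦ, hone, hp0]
      have htpos : (0:ℝ) < Real.log (1 / (8 * ρ m)) := lt_of_lt_of_le (Real.exp_pos 1) (hte m hm)
      have hLle : L m hm ≤ M₀ * (m:ℝ)^2 := by
        rw [hLdef m hm]
        calc Real.log (Real.log (1 / (8 * ρ m))) ≤ Real.log (1 / (8 * ρ m)) :=
              Real.log_le_self htpos.le
          _ ≤ M₀ * (m:ℝ)^2 := hlogρ m hm
      have hc : ((n:ℝ)+1) = (m:ℝ) := by rw [hmdef]; push_cast; ring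
      have hfinal : (P {ω | gaugeFun φinv (8 * ρ m) < S (2 * ρ (m+1)) ω}).toReal
          ≤ M₀ * ((n:ℝ)+1)^2 * Real.exp (-((n:ℝ)+1)) := by
        rw [hc]
        have hexpm := (Real.exp_pos (-(m:ℝ))).le
        nlinarith
      calc P {ω | gaugeFun φinv (8 * ρ m) < S (2 * ρ (m+1)) ω}
          = ENNReal.ofReal ((P {ω | gaugeFun φinv (8 * ρ m) < S (2 * ρ (m+1)) ω}).toReal) :=
            (ENNReal.ofReal_toReal (measure_ne_top P _)).symm
        _ ≤ ENNReal.ofReal (M₀ * ((n:ℝ)+1)^2 * Real.exp (-((n:ℝ)+1))) :=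
            ENNReal.ofReal_le_ofReal hfinal
    have hsumb : Summable (fun n : ℕ => M₀ * ((n:ℝ)+1)^2 * Real.exp (-((n:ℝ)+1))) := by
      have h0 : Summable (fun k : ℕ => (k:ℝ)^2 * Real.exp (-1:ℝ) ^ k) :=
        summable_pow_mul_geometric_of_norm_lt_one 2 (by
          rw [Real.norm_eq_abs, abs_of_pos (Real.exp_pos _)]
          exact Real.exp_lt_one_iff.mpr (by norm_num))
      have h1 : Summable (fun n : ℕ => ((n+1:ℕ):ℝ)^2 * Real.exp (-1:ℝ) ^ (n+1)) :=
        (summable_nat_add_iff 1).2 h0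
      refine (h1.mul_left M₀).congr fun n => ?_
      rw [show -((n:ℝ)+1) = ((n+1:ℕ):ℝ) * (-1) by push_cast; ring, Real.exp_nat_mul]
      push_cast
      ring
    have hPs : (∑' n : ℕ, P {ω | gaugeFun φinv (8 * ρ (n+1)) < S (2 * ρ (n+1+1)) ω}) ≠ ⊤ := by
      refine ne_top_of_le_ne_top ?_ (ENNReal.tsum_le_tsum hbound)
      rw [← ENNReal.ofReal_tsum_of_nonneg (fun n => by positivity) hsumb]
      exact ENNReal.ofReal_ne_top
    filter_upwards [MeasureTheory.ae_eventually_notMem hPs] with ω hω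
    obtain ⟨N, hN⟩ := eventually_atTop.1 hω
    refine ⟨1 + ∑ j ∈ Finset.Icc 1 (N+1), S (2 * ρ (j+1)) ω / gaugeFun φinv (8 * ρ j), ?_⟩
    have hnn : ∀ j ∈ Finset.Icc 1 (N+1), 0 ≤ S (2 * ρ (j+1)) ω / gaugeFun φinv (8 * ρ j) := by
      intro j hj
      exact div_nonneg (hSnonneg _ _) (hgpos j (Finset.mem_Icc.1 hj).1).le
    have hsnn : 0 ≤ ∑ j ∈ Finset.Icc 1 (N+1), S (2 * ρ (j+1)) ω / gaugeFun φinv (8 * ρ j) :=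
      Finset.sum_nonneg hnn
    intro n hn
    by_cases hcase : n ≤ N + 1
    · have hmem : n ∈ Finset.Icc 1 (N+1) := Finset.mem_Icc.2 ⟨hn, hcase⟩
      have := Finset.single_le_sum hnn hmem
      linarith
    · push_neg at hcase
      obtain ⟨k, rfl⟩ : ∃ k, n = k + 1 := ⟨n - 1, by omega⟩
      have hk : N ≤ k := by omega
      have hnot := hN k hk
      simp only [Set.mem_setOf_eq, not_lt] at hnot
      have hg := hgpos (k+1) (by omega)
      have hdiv : S (2 * ρ (k+1+1)) ω / gaugeFun φinv (8 * ρ (k+1)) ≤ 1 :=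
        (div_le_one hg).2 hnot
      linarith
end
end

section
/- Let ψ be a branching mechanism of Lévy–Khintchine form with γ > 1, and let u ∈ (0, 2γ/(γ−1)). Then there exists a decreasing sequence (s_n)_{n≥1} of positive reals tending to 0, depending only on ψ and u, with the following property: for every probability space (Ω, 𝓕, P) carrying a family (T_r)_{r ∈ [0,∞)} of nonnegative random variables such that E[exp(−λ·T_r)] = exp(−r·(2·(ψ′(ψ^{−1}(λ)) − α))^{1/2}) for all λ, r ∈ [0,∞) and such that P-almost surely r ↦ T_r is nondecreasing, one has: (i) Σ_{n≥1} P(T_{2s_n} ≤ s_n^u) = ∞; and (ii) P-almost surely, limsup_{n→∞} T_{2s_{n+1}}/s_n^u < ∞. -/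
open MeasureTheory Filter Set

noncomputable section

lemma aux_exp1 {x : ℝ} (hx : 0 ≤ x) :
    x * (1 - Real.exp (-x)) ≤ 2 * (Real.exp (-x) - 1 + x) := by
  have hmono : Monotone (fun x : ℝ => 2 + x - (2 - x) * Real.exp x) := by
    have hdiff : Differentiable ℝ (fun x : ℝ => 2 + x - (2 - x) * Real.exp x) := by
      fun_prop
    apply monotone_of_deriv_nonneg hdiff
    intro y
    have h1 : HasDerivAt (fun x : ℝ => (2 - x) * Real.exp x)
        ((0 - 1) * Real.exp y + (2 - y) * Real.exp y) y :=
      (((hasDerivAt_const y (2:ℝ)).sub (hasDerivAt_id y))).mul (Real.hasDerivAt_exp y)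
    have h2 : HasDerivAt (fun x : ℝ => 2 + x - (2 - x) * Real.exp x)
        ((0 + 1) - ((0 - 1) * Real.exp y + (2 - y) * Real.exp y)) y :=
      ((hasDerivAt_const y (2:ℝ)).add (hasDerivAt_id y)).sub h1
    rw [h2.deriv]
    have h3 : (1 - y) * Real.exp y ≤ 1 := by
      have h4 : (1 - y) ≤ Real.exp (-y) := Real.one_sub_le_exp_neg y
      calc (1 - y) * Real.exp y ≤ Real.exp (-y) * Real.exp y :=
            mul_le_mul_of_nonneg_right h4 (Real.exp_pos y).le
        _ = 1 := by rw [← Real.exp_add]; simp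
    nlinarith [Real.exp_pos y]
  have h0 : (0:ℝ) ≤ 2 + x - (2 - x) * Real.exp x := by
    have := hmono hx
    simpa using this
  have hex : Real.exp (-x) * Real.exp x = 1 := by rw [← Real.exp_add]; simp
  nlinarith [Real.exp_pos (-x), mul_nonneg (Real.exp_pos (-x)).le h0]

lemma aux_exp3 (x : ℝ) : 0 ≤ Real.exp (-x) - 1 + x := by
  have := Real.one_sub_le_exp_neg x; linarith

lemma aux_exp2 {x : ℝ} (hx : 0 ≤ x) : Real.exp (-x) - 1 + x ≤ min x (x ^ 2) := by
  have h1 : Real.exp (-x) ≤ 1 := Real.exp_le_one_iff.mpr (by linarith)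
  have hp : (0:ℝ) < 1 + x := by linarith
  have h3 : 1 + x ≤ Real.exp x := by have := Real.add_one_le_exp x; linarith
  have h2 : Real.exp (-x) ≤ 1 / (1 + x) := by
    rw [Real.exp_neg, one_div]; exact inv_anti₀ hp h3
  have h4 : Real.exp (-x) - 1 + x ≤ x ^ 2 := by
    have he : 1 / (1 + x) - 1 + x = x ^ 2 / (1 + x) := by field_simp; ring
    have h5 : x ^ 2 / (1 + x) ≤ x ^ 2 := by apply div_le_self (by positivity); linarith
    linarith
  exact le_min (by linarith) h4

lemma aux_exp4 {x : ℝ} (hx : 0 ≤ x) : 1 - Real.exp (-x) ≤ min 1 x := by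
  have h1 : (0:ℝ) ≤ Real.exp (-x) := (Real.exp_pos _).le
  have h2 : 1 - x ≤ Real.exp (-x) := Real.one_sub_le_exp_neg x
  exact le_min (by linarith) (by linarith)

section br
variable {α β : ℝ} {π : Measure ℝ} (h : IsBranchingMechanism α β π)

lemma ae_pos (h : IsBranchingMechanism α β π) : ∀ᵐ r ∂π, 0 < r := by
  rw [ae_iff]
  convert h.carried_on_pos using 2
  ext r; simp [not_lt]

lemma min_nonneg_ae (h : IsBranchingMechanism α β π) : ∀ᵐ r ∂π, 0 ≤ min r (r ^ 2) := by
  filter_upwards [ae_pos h] with r hr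
  exact le_min hr.le (by positivity)

lemma min_bound {l r : ℝ} (hl : 0 ≤ l) (hr : 0 < r) :
    min (l * r) ((l * r) ^ 2) ≤ max l (l ^ 2) * min r (r ^ 2) := by
  rcases le_total r 1 with h1 | h1
  · have : min r (r ^ 2) = r ^ 2 := min_eq_right (by nlinarith)
    rw [this]
    calc min (l * r) ((l * r) ^ 2) ≤ (l * r) ^ 2 := min_le_right _ _
      _ = l ^ 2 * r ^ 2 := by ring
      _ ≤ max l (l ^ 2) * r ^ 2 := by
          apply mul_le_mul_of_nonneg_right (le_max_right _ _) (by positivity)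
  · have : min r (r ^ 2) = r := min_eq_left (by nlinarith)
    rw [this]
    calc min (l * r) ((l * r) ^ 2) ≤ l * r := min_le_left _ _
      _ ≤ max l (l ^ 2) * r := by
          apply mul_le_mul_of_nonneg_right (le_max_left _ _) (by linarith)

lemma integ1 (h : IsBranchingMechanism α β π) {l : ℝ} (hl : 0 ≤ l) :
    Integrable (fun r => Real.exp (-(l * r)) - 1 + l * r) π := by
  apply Integrable.mono' ((h.integ_min).const_mul (max l (l ^ 2)))
  · apply Measurable.aestronglyMeasurable
    fun_prop
  · filter_upwards [ae_pos h] with r hr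
    have hx : 0 ≤ l * r := mul_nonneg hl hr.le
    rw [Real.norm_eq_abs, abs_of_nonneg (aux_exp3 (l * r))]
    calc Real.exp (-(l * r)) - 1 + l * r ≤ min (l * r) ((l * r) ^ 2) := aux_exp2 hx
      _ ≤ max l (l ^ 2) * min r (r ^ 2) := min_bound hl hr

lemma integ2 (h : IsBranchingMechanism α β π) {l : ℝ} (hl : 0 ≤ l) :
    Integrable (fun r => r * (1 - Real.exp (-(l * r)))) π := by
  apply Integrable.mono' ((h.integ_min).const_mul (max 1 l))
  · apply Measurable.aestronglyMeasurable
    fun_prop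
  · filter_upwards [ae_pos h] with r hr
    have hx : 0 ≤ l * r := mul_nonneg hl hr.le
    have h4 := aux_exp4 hx
    have h1 : (0:ℝ) ≤ 1 - Real.exp (-(l * r)) := by
      have : Real.exp (-(l*r)) ≤ 1 := Real.exp_le_one_iff.mpr (by linarith)
      linarith
    rw [Real.norm_eq_abs, abs_of_nonneg (mul_nonneg hr.le h1)]
    rcases le_total r 1 with hr1 | hr1
    · have hm : min r (r ^ 2) = r ^ 2 := min_eq_right (by nlinarith)
      rw [hm]
      calc r * (1 - Real.exp (-(l * r))) ≤ r * (l * r) := by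
            apply mul_le_mul_of_nonneg_left (le_trans h4 (min_le_right _ _)) hr.le
        _ = l * r ^ 2 := by ring
        _ ≤ max 1 l * r ^ 2 := mul_le_mul_of_nonneg_right (le_max_right _ _) (by positivity)
    · have hm : min r (r ^ 2) = r := min_eq_left (by nlinarith)
      rw [hm]
      calc r * (1 - Real.exp (-(l * r))) ≤ r * 1 := by
            apply mul_le_mul_of_nonneg_left (le_trans h4 (min_le_left _ _)) hr.le
        _ = 1 * r := by ring
        _ ≤ max 1 l * r := mul_le_mul_of_nonneg_right (le_max_left _ _) (by linarith)

lemma psiFun_nonneg (h : IsBranchingMechanism α β π) {l : ℝ} (hl : 0 ≤ l) :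
    0 ≤ psiFun α β π l := by
  have hi : 0 ≤ ∫ r, (Real.exp (-(l * r)) - 1 + l * r) ∂π := by
    apply integral_nonneg_of_ae
    filter_upwards [ae_pos h] with r _
    exact aux_exp3 (l * r)
  have := h.alpha_nonneg; have := h.beta_nonneg
  unfold psiFun
  positivity

lemma psiDeriv_le (h : IsBranchingMechanism α β π) {l : ℝ} (hl : 1 ≤ l) :
    2 * (psiDeriv α β π l - α) ≤ 4 * psiFun α β π l / l := by
  have hl0 : (0:ℝ) < l := by linarith
  have key : l * ∫ r, r * (1 - Real.exp (-(l * r))) ∂π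
      ≤ 2 * ∫ r, (Real.exp (-(l * r)) - 1 + l * r) ∂π := by
    rw [← integral_const_mul, ← integral_const_mul]
    apply integral_mono_ae ((integ2 h hl0.le).const_mul l) ((integ1 h hl0.le).const_mul 2)
    filter_upwards [ae_pos h] with r hr
    have hx : 0 ≤ l * r := mul_nonneg hl0.le hr.le
    have := aux_exp1 hx
    calc l * (r * (1 - Real.exp (-(l * r)))) = (l * r) * (1 - Real.exp (-(l * r))) := by ring
      _ ≤ 2 * (Real.exp (-(l * r)) - 1 + l * r) := aux_exp1 hx
  rw [le_div_iff₀ hl0]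
  have hα := h.alpha_nonneg
  unfold psiDeriv psiFun
  nlinarith [key]

lemma sfun_identity {P l u : ℝ} (hl : 0 < l) (hP : 0 < P) :
    P * ((l / P) ^ ((1:ℝ)/2) / 4) ^ u = P ^ (1 - u/2) * l ^ (u/2) / 4 ^ u := by
  have hd : (0:ℝ) ≤ l / P := by positivity
  rw [Real.div_rpow (Real.rpow_nonneg hd _) (by norm_num : (0:ℝ) ≤ 4),
    ← Real.rpow_mul hd, Real.div_rpow hl.le hP.le, Real.rpow_sub hP, Real.rpow_one]
  have h1 : (1:ℝ)/2 * u = u/2 := by ring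
  rw [h1]
  have h2 : P ^ (u/2) ≠ 0 := (Real.rpow_pos_of_pos hP _).ne'
  have h3 : (4:ℝ) ^ u ≠ 0 := (Real.rpow_pos_of_pos (by norm_num) _).ne'
  field_simp

lemma good_case1 {P l u c₀ : ℝ} (hl1 : 1 ≤ l) (hP : l ^ c₀ ≤ P) (hu2 : u ≤ 2)
    (h4a : 2 ≤ (4:ℝ) ^ (-u) * l ^ (c₀ * (1 - u/2) + u/2)) :
    2 ≤ P ^ (1 - u/2) * l ^ (u/2) / 4 ^ u := by
  have hl0 : (0:ℝ) < l := by linarith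
  have e1 : l ^ (c₀ * (1 - u/2)) ≤ P ^ (1 - u/2) := by
    have := Real.rpow_le_rpow (Real.rpow_nonneg hl0.le _) hP (by linarith : (0:ℝ) ≤ 1 - u/2)
    rwa [← Real.rpow_mul hl0.le] at this
  have e2 : (4:ℝ) ^ (-u) * l ^ (c₀ * (1 - u/2) + u/2)
      = l ^ (c₀ * (1 - u/2)) * l ^ (u/2) / 4 ^ u := by
    rw [Real.rpow_add hl0, Real.rpow_neg (by norm_num : (0:ℝ) ≤ 4)]; ring
  rw [e2] at h4a
  refine le_trans h4a ((div_le_div_iff_of_pos_right (Real.rpow_pos_of_pos (by norm_num) u)).mpr ?_)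
  exact mul_le_mul_of_nonneg_right e1 (Real.rpow_nonneg hl0.le _)

lemma good_case2 {P l u c K : ℝ} (hl1 : 1 ≤ l) (hP0 : 0 < P) (hPK : P ≤ K * l ^ c)
    (hK : 0 < K) (hu2 : 2 < u)
    (h4b : 2 ≤ ((4:ℝ) ^ (-u) * K ^ (1 - u/2)) * l ^ (c * (1 - u/2) + u/2)) :
    2 ≤ P ^ (1 - u/2) * l ^ (u/2) / 4 ^ u := by
  have hl0 : (0:ℝ) < l := by linarith
  have e1 : (K * l ^ c) ^ (1 - u/2) ≤ P ^ (1 - u/2) :=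
    Real.rpow_le_rpow_of_nonpos hP0 hPK (by linarith)
  have e2 : (K * l ^ c) ^ (1 - u/2) = K ^ (1 - u/2) * l ^ (c * (1 - u/2)) := by
    rw [Real.mul_rpow hK.le (Real.rpow_nonneg hl0.le _), ← Real.rpow_mul hl0.le]
  have e3 : ((4:ℝ) ^ (-u) * K ^ (1 - u/2)) * l ^ (c * (1 - u/2) + u/2)
      = (K ^ (1 - u/2) * l ^ (c * (1 - u/2))) * l ^ (u/2) / 4 ^ u := by
    rw [Real.rpow_add hl0, Real.rpow_neg (by norm_num : (0:ℝ) ≤ 4)]; ring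
  rw [e3] at h4b
  refine le_trans h4b ((div_le_div_iff_of_pos_right (Real.rpow_pos_of_pos (by norm_num) u)).mpr ?_)
  exact mul_le_mul_of_nonneg_right (e2 ▸ e1) (Real.rpow_nonneg hl0.le _)

lemma sfun_le {P l c₀ ε : ℝ} (hl1 : 1 ≤ l) (hP : l ^ c₀ ≤ P) (h3 : l ^ ((1 - c₀)/2) < 4 * ε) :
    (l / P) ^ ((1:ℝ)/2) / 4 ≤ ε := by
  have hl0 : (0:ℝ) < l := by linarith
  have hP0 : (0:ℝ) < P := lt_of_lt_of_le (Real.rpow_pos_of_pos hl0 _) hP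
  have h1 : l / P ≤ l ^ (1 - c₀) := by
    have he : l ^ (1 - c₀) = l / l ^ c₀ := by rw [Real.rpow_sub hl0, Real.rpow_one]
    rw [he]
    gcongr
  have h2 : (l / P) ^ ((1:ℝ)/2) ≤ (l ^ (1 - c₀)) ^ ((1:ℝ)/2) :=
    Real.rpow_le_rpow (by positivity) h1 (by norm_num)
  have h3' : (l ^ (1 - c₀)) ^ ((1:ℝ)/2) = l ^ ((1 - c₀)/2) := by
    rw [← Real.rpow_mul hl0.le]
    congr 1
    ring
  linarith


lemma key_sqrt {P l d : ℝ} (hl : 0 < l) (hP : 0 < P) (hd : d ≤ 4 * P / l) :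
    2 * ((l / P) ^ ((1:ℝ)/2) / 4) * Real.sqrt d ≤ 1 := by
  have h1 : Real.sqrt d ≤ Real.sqrt (4 * P / l) := Real.sqrt_le_sqrt hd
  have h2 : Real.sqrt (4 * P / l) = 2 * (P / l) ^ ((1:ℝ)/2) := by
    rw [show 4 * P / l = (2:ℝ)^2 * (P / l) by ring, Real.sqrt_mul (by positivity),
      Real.sqrt_sq (by norm_num : (0:ℝ) ≤ 2), Real.sqrt_eq_rpow]
  have h3 : (l / P) ^ ((1:ℝ)/2) * (P / l) ^ ((1:ℝ)/2) = 1 := by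
    rw [← Real.mul_rpow (by positivity) (by positivity),
      show l / P * (P / l) = 1 by field_simp]
    exact Real.one_rpow _
  calc 2 * ((l / P) ^ ((1:ℝ)/2) / 4) * Real.sqrt d
      ≤ 2 * ((l / P) ^ ((1:ℝ)/2) / 4) * (2 * (P / l) ^ ((1:ℝ)/2)) := by
        rw [← h2]
        exact mul_le_mul_of_nonneg_left h1 (by positivity)
    _ = (l / P) ^ ((1:ℝ)/2) * (P / l) ^ ((1:ℝ)/2) := by ring
    _ = 1 := h3


lemma arith1 {u γ c₀ : ℝ} (hu0 : 0 < u) (hγ1 : 1 < γ) (hc₀1 : 1 < c₀) (hc₀γ : c₀ ≤ γ)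
    (huγ : u * (γ - 1) < 2 * γ) : 0 < c₀ * (1 - u/2) + u/2 := by
  have h1 : u * (γ - 1) * (c₀ - 1) < 2 * γ * (c₀ - 1) :=
    mul_lt_mul_of_pos_right huγ (by linarith)
  have h2 : 2 * γ * (c₀ - 1) ≤ 2 * c₀ * (γ - 1) := by nlinarith
  have h3 : (u * (c₀ - 1)) * (γ - 1) < (2 * c₀) * (γ - 1) := by nlinarith
  have h4 : u * (c₀ - 1) < 2 * c₀ := lt_of_mul_lt_mul_right (by nlinarith) (by linarith)
  nlinarith

lemma arith2 {u v c : ℝ} (huv : u < v) (hc1 : 1 < c) (hvc : v * (c - 1) = 2 * c) :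
    0 < c * (1 - u/2) + u/2 := by
  have h1 : u * (c - 1) < v * (c - 1) := mul_lt_mul_of_pos_right huv (by linarith)
  nlinarith

set_option maxHeartbeats 1000000

/-- if γ > 1 and u ∈ (0, 2γ/(γ−1)), there is a decreasing sequence
(s_n)_{n≥1} of positive reals tending to 0 such that for any family (T_r) with
Laplace exponent (2(ψ′∘ψ^{−1} − α))^{1/2} that is a.s. nondecreasing in r,
Σ_{n≥1} P(T_{2s_n} ≤ s_n^u) = ∞ and P-a.s. limsup_n T_{2s_{n+1}}/s_n^u < ∞. -/
theorem statement16 (α β : ℝ) (π : Measure ℝ) (h : IsBranchingMechanism α β π)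
    (hγ : 1 < lowerIndex (psiFun α β π))
    (ψinv : ℝ → ℝ)
    (hψinv : ∀ x : ℝ, 0 ≤ x → 0 ≤ ψinv x ∧ psiFun α β π (ψinv x) = x)
    (hψinv' : ∀ y : ℝ, 0 ≤ y → ψinv (psiFun α β π y) = y)
    (u : ℝ) (hu0 : 0 < u)
    (hu : u < 2 * lowerIndex (psiFun α β π) / (lowerIndex (psiFun α β π) - 1)) :
    ∃ s : ℕ → ℝ,
      (∀ n : ℕ, 0 < s n) ∧ Antitone s ∧ Tendsto s atTop (nhds 0) ∧
      ∀ (Ω : Type) [MeasurableSpace Ω] (P : Measure Ω) [IsProbabilityMeasure P],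
        ∀ T : ℝ → Ω → ℝ,
          (∀ r : ℝ, Measurable (T r)) →
          (∀ (r : ℝ) (ω : Ω), 0 ≤ T r ω) →
          (∀ lam r : ℝ, 0 ≤ lam → 0 ≤ r →
            (∫ ω, Real.exp (-(lam * T r ω)) ∂P)
              = Real.exp (-(r * Real.sqrt (2 * (psiDeriv α β π (ψinv lam) - α))))) →
          (∀ᵐ ω ∂P, Monotone fun r => T r ω) →
          (∑' n : ℕ, P {ω | T (2 * s (n + 1)) ω ≤ s (n + 1) ^ u} = ⊤) ∧
          (∀ᵐ ω ∂P, ∃ M : ℝ, ∀ n : ℕ, 1 ≤ n →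
            T (2 * s (n + 1)) ω / s n ^ u ≤ M) := by
  classical
  have hγ' : 1 < sSup {c : ℝ | 0 ≤ c ∧
      Tendsto (fun l : ℝ => psiFun α β π l * l ^ (-c)) atTop atTop} := hγ
  set S := {c : ℝ | 0 ≤ c ∧ Tendsto (fun l : ℝ => psiFun α β π l * l ^ (-c)) atTop atTop}
    with hSdef
  have hu' : u < 2 * sSup S / (sSup S - 1) := hu
  set γ := sSup S with hγdef
  have hSne : S.Nonempty := by
    by_contra hne
    rw [Set.not_nonempty_iff_eq_empty] at hne
    rw [hγdef, hne, Real.sSup_empty] at hγ'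
    norm_num at hγ'
  have hSbdd : BddAbove S := by
    by_contra hb
    rw [hγdef, Real.sSup_of_not_bddAbove hb] at hγ'
    norm_num at hγ'
  obtain ⟨c₀, hc₀S, hc₀1⟩ := exists_lt_of_lt_csSup hSne hγ'
  have hc₀γ : c₀ ≤ γ := le_csSup hSbdd hc₀S
  obtain ⟨hc₀0, hc₀T⟩ := hc₀S
  have hγ1 : (0:ℝ) < γ - 1 := by linarith
  have huγ : u * (γ - 1) < 2 * γ := by
    have := (lt_div_iff₀ hγ1).mp hu'
    linarith
  have hρ2 : 2 < 2 * γ / (γ - 1) := by rw [lt_div_iff₀ hγ1]; linarith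
  have hmax : max u 2 < 2 * γ / (γ - 1) := max_lt hu' hρ2
  set v := (max u 2 + 2 * γ / (γ - 1)) / 2 with hvdef
  have h2v : 2 < v := by
    have h1 := le_max_right u 2
    rw [hvdef]; linarith
  have huv : u < v := by
    have h1 := le_max_left u 2
    rw [hvdef]; linarith
  have hvρ : v < 2 * γ / (γ - 1) := by rw [hvdef]; linarith
  have hv2 : (0:ℝ) < v - 2 := by linarith
  set c := v / (v - 2) with hcdef
  have hc1 : 1 < c := (one_lt_div hv2).mpr (by linarith)
  have hvc : v * (c - 1) = 2 * c := by
    rw [hcdef]; field_simp; ring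
  have hγc : γ < c := by
    rw [hcdef, lt_div_iff₀ hv2]
    have hvγ : v * (γ - 1) < 2 * γ := (lt_div_iff₀ hγ1).mp hvρ
    nlinarith
  have hcS : c ∉ S := fun hc => absurd (le_csSup hSbdd hc) (not_le.mpr hγc)
  have hcnt : ¬ Tendsto (fun l : ℝ => psiFun α β π l * l ^ (-c)) atTop atTop := by
    intro ht; exact hcS ⟨by linarith, ht⟩
  rw [tendsto_atTop] at hcnt
  push_neg at hcnt
  obtain ⟨K₀, hK₀⟩ := hcnt
  set K := max K₀ 1 with hKdef
  have hK1 : (1:ℝ) ≤ K := le_max_right _ _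
  have hfreq : ∃ᶠ l in atTop, psiFun α β π l ≤ K * l ^ c := by
    apply (hK₀.and_eventually (eventually_gt_atTop 0)).mono
    rintro l ⟨hl1, hl0⟩
    have hlc : (0:ℝ) < l ^ c := Real.rpow_pos_of_pos hl0 c
    have hid : l ^ (-c) * l ^ c = 1 := by
      rw [← Real.rpow_add hl0]; simp
    calc psiFun α β π l = psiFun α β π l * (l ^ (-c) * l ^ c) := by rw [hid, mul_one]
      _ = (psiFun α β π l * l ^ (-c)) * l ^ c := by ring
      _ ≤ K₀ * l ^ c := mul_le_mul_of_nonneg_right (le_of_lt hl1) hlc.le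
      _ ≤ K * l ^ c := mul_le_mul_of_nonneg_right (le_max_left _ _) hlc.le
  have hc₀ev : ∀ᶠ l in atTop, l ^ c₀ ≤ psiFun α β π l := by
    filter_upwards [hc₀T.eventually_ge_atTop 1, eventually_gt_atTop (0:ℝ)] with l h1 hl0
    have hp : (0:ℝ) < l ^ c₀ := Real.rpow_pos_of_pos hl0 _
    rw [Real.rpow_neg hl0.le, ← div_eq_mul_inv, le_div_iff₀ hp] at h1
    linarith
  have hθ₁ : 0 < c₀ * (1 - u/2) + u/2 := arith1 hu0 (by linarith) hc₀1 hc₀γ huγ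
  have hθ₂ : 0 < c * (1 - u/2) + u/2 := arith2 huv hc1 hvc
  set sfun : ℝ → ℝ := fun l => (l / psiFun α β π l) ^ ((1:ℝ)/2) / 4 with hsfundef
  have hGood : ∀ ε : ℝ, 0 < ε → ∃ l : ℝ,
      (1 ≤ l ∧ l ^ c₀ ≤ psiFun α β π l ∧ 2 ≤ psiFun α β π l * sfun l ^ u) ∧ sfun l ≤ ε := by
    intro ε hε
    have h3 : ∀ᶠ l : ℝ in atTop, l ^ ((1 - c₀)/2) < 4 * ε := by
      have ht := tendsto_rpow_neg_atTop (show (0:ℝ) < (c₀ - 1)/2 by linarith)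
      have heq : (1 - c₀)/2 = -((c₀ - 1)/2) := by ring
      rw [heq]
      exact ht.eventually_lt_const (by linarith)
    have h4a : ∀ᶠ l : ℝ in atTop, 2 ≤ (4:ℝ) ^ (-u) * l ^ (c₀ * (1 - u/2) + u/2) := by
      have := (tendsto_rpow_atTop hθ₁).const_mul_atTop
        (show (0:ℝ) < (4:ℝ) ^ (-u) from Real.rpow_pos_of_pos (by norm_num) _)
      exact this.eventually_ge_atTop 2
    have h4b : ∀ᶠ l : ℝ in atTop,
        2 ≤ ((4:ℝ) ^ (-u) * K ^ (1 - u/2)) * l ^ (c * (1 - u/2) + u/2) := by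
      have hD : (0:ℝ) < (4:ℝ) ^ (-u) * K ^ (1 - u/2) :=
        mul_pos (Real.rpow_pos_of_pos (by norm_num) _) (Real.rpow_pos_of_pos (by linarith) _)
      exact ((tendsto_rpow_atTop hθ₂).const_mul_atTop hD).eventually_ge_atTop 2
    obtain ⟨l, hlK, hl1, hlc₀, hl3, hl4a, hl4b⟩ :=
      (hfreq.and_eventually ((eventually_ge_atTop 1).and (hc₀ev.and (h3.and
        (h4a.and h4b))))).exists
    have hl0 : (0:ℝ) < l := lt_of_lt_of_le one_pos hl1
    have hΨ : (0:ℝ) < psiFun α β π l :=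
      lt_of_lt_of_le (Real.rpow_pos_of_pos hl0 c₀) hlc₀
    refine ⟨l, ⟨hl1, hlc₀, ?_⟩, sfun_le hl1 hlc₀ hl3⟩
    have hiden : psiFun α β π l * sfun l ^ u
        = psiFun α β π l ^ (1 - u/2) * l ^ (u/2) / 4 ^ u := sfun_identity hl0 hΨ
    rw [hiden]
    rcases le_or_gt u 2 with hu2 | hu2
    · exact good_case1 hl1 hlc₀ hu2 hl4a
    · exact good_case2 hl1 hΨ hlK (by linarith) hu2 hl4b
  -- positivity of sfun on good points
  have sfun_pos : ∀ l : ℝ, 1 ≤ l → l ^ c₀ ≤ psiFun α β π l → 0 < sfun l := by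
    intro l h1 h2
    have hl0 : (0:ℝ) < l := by linarith
    have hΨ : (0:ℝ) < psiFun α β π l := lt_of_lt_of_le (Real.rpow_pos_of_pos hl0 _) h2
    have := Real.rpow_pos_of_pos (div_pos hl0 hΨ) ((1:ℝ)/2)
    rw [hsfundef]
    positivity
  -- recursive construction
  obtain ⟨l₀, hl₀G, _⟩ := hGood 1 one_pos
  have step : ∀ (x : {l : ℝ // 1 ≤ l ∧ l ^ c₀ ≤ psiFun α β π l ∧
        2 ≤ psiFun α β π l * sfun l ^ u}) (n : ℕ),
      ∃ y : {l : ℝ // 1 ≤ l ∧ l ^ c₀ ≤ psiFun α β π l ∧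
        2 ≤ psiFun α β π l * sfun l ^ u},
        sfun y.1 ≤ sfun x.1 * (1/2) ^ (n+1) := by
    intro x n
    have hp : 0 < sfun x.1 * (1/2 : ℝ) ^ (n+1) := by
      have := sfun_pos x.1 x.2.1 x.2.2.1
      positivity
    obtain ⟨l, hg, hle⟩ := hGood _ hp
    exact ⟨⟨l, hg⟩, hle⟩
  choose F hF using step
  let Gs : ℕ → {l : ℝ // 1 ≤ l ∧ l ^ c₀ ≤ psiFun α β π l ∧
      2 ≤ psiFun α β π l * sfun l ^ u} :=
    fun n => Nat.rec ⟨l₀, hl₀G⟩ (fun n y => F y n) n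
  set s : ℕ → ℝ := fun n => sfun (Gs n).1 with hs_def
  have spos : ∀ n, 0 < s n := fun n => sfun_pos _ (Gs n).2.1 (Gs n).2.2.1
  have hhalf : ∀ n, s (n+1) ≤ s n * (1/2) ^ (n+1) := fun n => hF (Gs n) n
  have hanti : Antitone s := by
    apply antitone_nat_of_succ_le
    intro n
    calc s (n+1) ≤ s n * (1/2) ^ (n+1) := hhalf n
      _ ≤ s n * 1 :=
          mul_le_mul_of_nonneg_left (pow_le_one₀ (by norm_num) (by norm_num)) (spos n).le
      _ = s n := mul_one _
  have hgeo : ∀ n, s n ≤ s 0 * (1/2) ^ n := by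
    intro n
    induction n with
    | zero => simp
    | succ n ih =>
      calc s (n+1) ≤ s n * (1/2) ^ (n+1) := hhalf n
        _ ≤ s n * (1/2) ^ 1 :=
            mul_le_mul_of_nonneg_left
              (pow_le_pow_of_le_one (by norm_num) (by norm_num) (by omega)) (spos n).le
        _ ≤ (s 0 * (1/2) ^ n) * (1/2) ^ 1 := by
            apply mul_le_mul_of_nonneg_right ih (by norm_num)
        _ = s 0 * (1/2) ^ (n+1) := by ring
  have htend : Tendsto s atTop (nhds 0) := by
    apply squeeze_zero (fun n => (spos n).le) hgeo
    have := (tendsto_pow_atTop_nhds_zero_of_lt_one (by norm_num : (0:ℝ) ≤ 1/2)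
      (by norm_num : (1/2:ℝ) < 1)).const_mul (s 0)
    simpa using this
  refine ⟨s, spos, hanti, htend, ?_⟩

  intro Ω _ P _ T hTm hTnn hLap _
  -- basic facts for each index
  have hL1 : ∀ n, 1 ≤ (Gs n).1 := fun n => (Gs n).2.1
  have hL0 : ∀ n, (0:ℝ) < (Gs n).1 := fun n => lt_of_lt_of_le one_pos (hL1 n)
  have hΨpos : ∀ n, 0 < psiFun α β π (Gs n).1 := fun n =>
    lt_of_lt_of_le (Real.rpow_pos_of_pos (hL0 n) c₀) (Gs n).2.2.1
  have hL2 : ∀ n, 2 ≤ psiFun α β π (Gs n).1 * s n ^ u := fun n => (Gs n).2.2.2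
  have hpinv : ∀ n, ψinv (psiFun α β π (Gs n).1) = (Gs n).1 :=
    fun n => hψinv' _ (by linarith [hL1 n])
  have hkey : ∀ n, 2 * s n * Real.sqrt (2 * (psiDeriv α β π (Gs n).1 - α)) ≤ 1 := by
    intro n
    have hle := psiDeriv_le h (hL1 n)
    exact key_sqrt (hL0 n) (hΨpos n) hle
  have J1 : ∀ lam r : ℝ, 0 ≤ lam → Integrable (fun ω => Real.exp (-(lam * T r ω))) P := by
    intro lam r hlam
    apply Integrable.mono' (integrable_const (1:ℝ))
    · exact (Real.measurable_exp.comp ((measurable_const.mul (hTm r)).neg)).aestronglyMeasurable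
    · filter_upwards with ω
      rw [Real.norm_eq_abs, Real.abs_exp]
      exact Real.exp_le_one_iff.mpr (neg_nonpos.mpr (mul_nonneg hlam (hTnn r ω)))
  constructor
  · -- divergent sum
    have hA : ∀ k : ℕ, ENNReal.ofReal (Real.exp (-1) - Real.exp (-2))
        ≤ P {ω | T (2 * s k) ω ≤ s k ^ u} := by
      intro k
      have hlam0 : (0:ℝ) ≤ psiFun α β π (Gs k).1 := (hΨpos k).le
      have hr0 : (0:ℝ) ≤ 2 * s k := by linarith [spos k]
      have hint := hLap (psiFun α β π (Gs k).1) (2 * s k) hlam0 hr0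
      rw [hpinv k] at hint
      set lam := psiFun α β π (Gs k).1 with hlamdef
      set A := {ω | T (2 * s k) ω ≤ s k ^ u} with hAdef
      have hAm : MeasurableSet A := measurableSet_le (hTm _) measurable_const
      have hub : ∫ ω, Real.exp (-(lam * T (2 * s k) ω)) ∂P
          ≤ (P A).toReal + Real.exp (-(lam * s k ^ u)) := by
        have hle : ∀ ω, Real.exp (-(lam * T (2 * s k) ω))
            ≤ A.indicator (fun _ => (1:ℝ)) ω + Real.exp (-(lam * s k ^ u)) := by
          intro ω
          by_cases hω : ω ∈ A
          · rw [Set.indicator_of_mem hω]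
            have h1 : Real.exp (-(lam * T (2 * s k) ω)) ≤ 1 :=
              Real.exp_le_one_iff.mpr (neg_nonpos.mpr (mul_nonneg hlam0 (hTnn (2 * s k) ω)))
            linarith [Real.exp_pos (-(lam * s k ^ u))]
          · rw [Set.indicator_of_notMem hω]
            have hTω : s k ^ u < T (2 * s k) ω := not_le.mp hω
            rw [zero_add]
            exact Real.exp_le_exp.mpr
              (neg_le_neg (mul_le_mul_of_nonneg_left hTω.le hlam0))
        calc ∫ ω, Real.exp (-(lam * T (2 * s k) ω)) ∂P
            ≤ ∫ ω, (A.indicator (fun _ => (1:ℝ)) ω + Real.exp (-(lam * s k ^ u))) ∂P :=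
              integral_mono (J1 lam (2 * s k) hlam0)
                (((integrable_const (1:ℝ)).indicator hAm).add (integrable_const _)) hle
          _ = (P A).toReal + Real.exp (-(lam * s k ^ u)) := by
              rw [integral_add ((integrable_const (1:ℝ)).indicator hAm) (integrable_const _),
                integral_indicator_const _ hAm, integral_const]
              simp [measure_univ, measureReal_def]
      have hlow : Real.exp (-1) ≤ ∫ ω, Real.exp (-(lam * T (2 * s k) ω)) ∂P := by
        rw [hint]
        exact Real.exp_le_exp.mpr (neg_le_neg (hkey k))
      have hsmall : Real.exp (-(lam * s k ^ u)) ≤ Real.exp (-2) :=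
        Real.exp_le_exp.mpr (neg_le_neg (hL2 k))
      have hfin : Real.exp (-1) - Real.exp (-2) ≤ (P A).toReal := by linarith
      calc ENNReal.ofReal (Real.exp (-1) - Real.exp (-2))
          ≤ ENNReal.ofReal ((P A).toReal) := ENNReal.ofReal_le_ofReal hfin
        _ = P A := ENNReal.ofReal_toReal (measure_ne_top P A)
    rw [← top_le_iff]
    have hne : ENNReal.ofReal (Real.exp (-1) - Real.exp (-2)) ≠ 0 := by
      refine (ENNReal.ofReal_pos.mpr ?_).ne'
      have : Real.exp (-2) < Real.exp (-1) := Real.exp_lt_exp.mpr (by norm_num)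
      linarith
    calc (⊤ : ENNReal) = ∑' (_ : ℕ), ENNReal.ofReal (Real.exp (-1) - Real.exp (-2)) :=
          (ENNReal.tsum_const_eq_top_of_ne_zero hne).symm
      _ ≤ ∑' n : ℕ, P {ω | T (2 * s (n + 1)) ω ≤ s (n + 1) ^ u} :=
          ENNReal.tsum_le_tsum (fun n => hA (n + 1))
  · -- a.s. boundedness
    set A' : ℕ → Set Ω := fun n => {ω | s n ^ u < T (2 * s (n + 1)) ω} with hA'def
    have hB : ∀ n : ℕ, P (A' n) ≤ ENNReal.ofReal ((1/2 : ℝ) ^ n) := by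
      intro n
      have hlam0 : (0:ℝ) ≤ psiFun α β π (Gs n).1 := (hΨpos n).le
      have hr0 : (0:ℝ) ≤ 2 * s (n + 1) := by linarith [spos (n + 1)]
      have hint := hLap (psiFun α β π (Gs n).1) (2 * s (n + 1)) hlam0 hr0
      rw [hpinv n] at hint
      set lam := psiFun α β π (Gs n).1 with hlamdef
      set g := Real.sqrt (2 * (psiDeriv α β π (Gs n).1 - α)) with hgdef
      have hg0 : 0 ≤ g := Real.sqrt_nonneg _
      have hA'm : MeasurableSet (A' n) := measurableSet_lt measurable_const (hTm _)
      have hlow : (1 - Real.exp (-(lam * s n ^ u))) * (P (A' n)).toReal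
          ≤ 1 - Real.exp (-(2 * s (n + 1) * g)) := by
        have hle : ∀ ω, (A' n).indicator (fun _ => 1 - Real.exp (-(lam * s n ^ u))) ω
            ≤ 1 - Real.exp (-(lam * T (2 * s (n + 1)) ω)) := by
          intro ω
          by_cases hω : ω ∈ A' n
          · rw [Set.indicator_of_mem hω]
            have hTω : s n ^ u < T (2 * s (n + 1)) ω := hω
            have : Real.exp (-(lam * T (2 * s (n + 1)) ω)) ≤ Real.exp (-(lam * s n ^ u)) :=
              Real.exp_le_exp.mpr (neg_le_neg (mul_le_mul_of_nonneg_left hTω.le hlam0))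
            linarith
          · rw [Set.indicator_of_notMem hω]
            have : Real.exp (-(lam * T (2 * s (n + 1)) ω)) ≤ 1 :=
              Real.exp_le_one_iff.mpr
                (neg_nonpos.mpr (mul_nonneg hlam0 (hTnn (2 * s (n + 1)) ω)))
            linarith
        have hI : ∫ ω, (A' n).indicator (fun _ => 1 - Real.exp (-(lam * s n ^ u))) ω ∂P
            ≤ ∫ ω, (1 - Real.exp (-(lam * T (2 * s (n + 1)) ω))) ∂P :=
          integral_mono ((integrable_const _).indicator hA'm)
            ((integrable_const (1:ℝ)).sub (J1 lam (2 * s (n + 1)) hlam0)) hle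
        rw [integral_indicator_const _ hA'm] at hI
        rw [integral_sub (integrable_const (1:ℝ)) (J1 lam (2 * s (n + 1)) hlam0),
          integral_const, hint] at hI
        rw [measureReal_def, measureReal_def, measure_univ, ENNReal.toReal_one, one_smul, smul_eq_mul] at hI
        rw [mul_comm]
        exact hI
      have h2' : 2 * s (n + 1) * g ≤ (1/2 : ℝ) ^ (n + 1) := by
        calc 2 * s (n + 1) * g ≤ 2 * (s n * (1/2) ^ (n + 1)) * g :=
              mul_le_mul_of_nonneg_right (by linarith [hhalf n]) hg0
          _ = (1/2 : ℝ) ^ (n + 1) * (2 * s n * g) := by ring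
          _ ≤ (1/2 : ℝ) ^ (n + 1) * 1 := by
              apply mul_le_mul_of_nonneg_left (hkey n) (by positivity)
          _ = (1/2 : ℝ) ^ (n + 1) := mul_one _
      have h3' : 1 - Real.exp (-(2 * s (n + 1) * g)) ≤ 2 * s (n + 1) * g := by
        have := Real.one_sub_le_exp_neg (2 * s (n + 1) * g)
        linarith
      have h4' : (1/2 : ℝ) ≤ 1 - Real.exp (-(lam * s n ^ u)) := by
        have he2 : Real.exp (-(lam * s n ^ u)) ≤ Real.exp (-2) :=
          Real.exp_le_exp.mpr (neg_le_neg (hL2 n))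
        have he3 : Real.exp (-2) ≤ 1/2 := by
          rw [Real.exp_neg]
          have h3 : (2:ℝ) ≤ Real.exp 2 := by linarith [Real.add_one_le_exp (2:ℝ)]
          have := inv_anti₀ (by norm_num : (0:ℝ) < 2) h3
          simpa using this
        linarith
      have hPA : (P (A' n)).toReal ≤ (1/2 : ℝ) ^ n := by
        have ht0 : 0 ≤ (P (A' n)).toReal := ENNReal.toReal_nonneg
        have hc : (1/2 : ℝ) * (P (A' n)).toReal ≤ (1/2 : ℝ) ^ (n + 1) := by
          calc (1/2 : ℝ) * (P (A' n)).toReal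
              ≤ (1 - Real.exp (-(lam * s n ^ u))) * (P (A' n)).toReal :=
                mul_le_mul_of_nonneg_right h4' ht0
            _ ≤ 1 - Real.exp (-(2 * s (n + 1) * g)) := hlow
            _ ≤ 2 * s (n + 1) * g := h3'
            _ ≤ (1/2 : ℝ) ^ (n + 1) := h2'
        have hps : (1/2 : ℝ) ^ (n + 1) = (1/2) * (1/2) ^ n := by ring
        rw [hps] at hc
        linarith
      calc P (A' n) = ENNReal.ofReal ((P (A' n)).toReal) :=
            (ENNReal.ofReal_toReal (measure_ne_top P _)).symm
        _ ≤ ENNReal.ofReal ((1/2 : ℝ) ^ n) := ENNReal.ofReal_le_ofReal hPA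
    have hBsum : ∑' n : ℕ, P (A' n) ≠ ⊤ := by
      have hle := ENNReal.tsum_le_tsum hB
      have heq : ∀ n : ℕ, ENNReal.ofReal ((1/2 : ℝ) ^ n) = (ENNReal.ofReal (1/2)) ^ n :=
        fun n => ENNReal.ofReal_pow (by norm_num) n
      have hgeo : ∑' n : ℕ, ENNReal.ofReal ((1/2 : ℝ) ^ n) ≠ ⊤ := by
        simp_rw [heq]
        rw [ENNReal.tsum_geometric]
        refine ENNReal.inv_ne_top.mpr ?_
        have : ENNReal.ofReal (1/2) < 1 := by
          rw [← ENNReal.ofReal_one]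
          exact ENNReal.ofReal_lt_ofReal_iff_of_nonneg (by norm_num) |>.mpr (by norm_num)
        exact (tsub_pos_of_lt this).ne'
      exact ne_top_of_le_ne_top hgeo hle
    have hlimz := measure_limsup_atTop_eq_zero hBsum
    have hae : (limsup A' atTop)ᶜ ∈ ae P := compl_mem_ae_iff.mpr hlimz
    filter_upwards [hae] with ω hω
    rw [Set.mem_compl_iff, limsup_eq_iInf_iSup_of_nat] at hω
    have hex : ∃ N : ℕ, ∀ i, N ≤ i → ω ∉ A' i := by
      by_contra hcon
      push_neg at hcon
      apply hω
      simp only [Set.iInf_eq_iInter, Set.iSup_eq_iUnion, Set.mem_iInter, Set.mem_iUnion]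
      intro N
      obtain ⟨i, hNi, hmem⟩ := hcon N
      exact ⟨i, hNi, hmem⟩
    obtain ⟨N, hN⟩ := hex
    have hterm : ∀ k : ℕ, 0 ≤ T (2 * s (k + 1)) ω / s k ^ u := fun k =>
      div_nonneg (hTnn _ _) (Real.rpow_pos_of_pos (spos k) u).le
    refine ⟨1 + ∑ k ∈ Finset.range (N + 1), T (2 * s (k + 1)) ω / s k ^ u, fun n _ => ?_⟩
    have hsum0 : 0 ≤ ∑ k ∈ Finset.range (N + 1), T (2 * s (k + 1)) ω / s k ^ u :=
      Finset.sum_nonneg fun k _ => hterm k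
    rcases le_or_gt N n with hNn | hnN
    · have hA'n : ω ∉ A' n := hN n hNn
      have hTle : T (2 * s (n + 1)) ω ≤ s n ^ u := not_lt.mp hA'n
      have hd : T (2 * s (n + 1)) ω / s n ^ u ≤ 1 :=
        (div_le_one (Real.rpow_pos_of_pos (spos n) u)).mpr hTle
      linarith
    · have hmem : n ∈ Finset.range (N + 1) := Finset.mem_range.mpr (by omega)
      have := Finset.single_le_sum (f := fun k => T (2 * s (k + 1)) ω / s k ^ u)
        (fun k _ => hterm k) hmem
      linarith
end br
end
end
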